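/- arXiv:1701.05990 — 10 statements merged into one kernel-verified Lean document; each statement's English description precedes it below -/
import Mathlib

section
/- Let K be a field of characteristic zero and A a unital K-algebra such that every K-subalgebra of A generated by finitely many elements is finite dimensional over K. If D is a locally finite K-derivation of A, then the image D(A) of D contains no nonzero idempotent of A, i.e., for every e ∈ A with e^2 = e and e ∈ D(A), one has e = 0. -/
/-- Let K be a field of characteristic zero and A a unital K-algebra such that
every K-subalgebra of A generated by finitely many elements is finite dimensional over K.
If D is a locally finite K-derivation of A, then the image D(A) of D contains no nonzero
idempotent of A. -/
theorem lfed_derivation_no_idempotent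
    (K : Type*) [Field K] [CharZero K]
    (A : Type*) [Ring A] [Algebra K A]
    (hKC : ∀ s : Finset A, FiniteDimensional K (Algebra.adjoin K (s : Set A)))
    (D : A →ₗ[K] A)
    (hDer : ∀ a b : A, D (a * b) = D a * b + a * D b)
    (hLF : ∀ a : A,
      FiniteDimensional K (Submodule.span K (Set.range fun i : ℕ => (D ^ i) a)))
    (e : A) (he : e * e = e) (heIm : e ∈ LinearMap.range D) :
    e = 0 := by
  obtain ⟨a, rfl⟩ := heIm
  set e := D a with hea
  set S : Submodule K A := Submodule.span K (Set.range fun i : ℕ => (D ^ i) a) with hS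
  have hSfd : FiniteDimensional K S := hLF a
  have hDS : ∀ x ∈ S, D x ∈ S := by
    intro x hx
    have hle : S.map D ≤ S := by
      rw [hS, Submodule.map_span, Submodule.span_le]
      rintro _ ⟨_, ⟨i, rfl⟩, rfl⟩
      exact Submodule.subset_span ⟨i + 1,
        show (D ^ (i + 1)) a = D ((D ^ i) a) by rw [pow_succ', Module.End.mul_apply]⟩
    exact hle (Submodule.mem_map_of_mem hx)
  obtain ⟨s, hs⟩ : S.FG := (Submodule.fg_iff_finiteDimensional _).2 hSfd
  set B : Subalgebra K A := Algebra.adjoin K (s : Set A) with hB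
  have hBfd : FiniteDimensional K B := hKC s
  have hSB : S ≤ Subalgebra.toSubmodule B := by
    rw [← hs, Submodule.span_le]
    exact fun x hx => Algebra.subset_adjoin hx
  have haS : a ∈ S := Submodule.subset_span ⟨0, rfl⟩
  have heS : e ∈ S := Submodule.subset_span ⟨1, by simp [hea]⟩
  have haB : a ∈ B := hSB haS
  have heB : e ∈ B := hSB heS
  have hD1 : D 1 = 0 := by
    have h : D 1 = D 1 + D 1 := by simpa using hDer 1 1
    exact (left_eq_add.mp h)
  -- B is D-stable
  have hDB : ∀ x ∈ Subalgebra.toSubmodule B, D x ∈ Subalgebra.toSubmodule B := by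
    intro x hx
    induction hx using Algebra.adjoin_induction with
    | mem x hx => exact hSB (hDS x ((hs ▸ Submodule.subset_span) hx))
    | algebraMap r =>
        have : D (algebraMap K A r) = r • D 1 := by
          rw [Algebra.algebraMap_eq_smul_one, map_smul]
        rw [this, hD1, smul_zero]; exact B.zero_mem
    | add x y hx hy ihx ihy => rw [map_add]; exact B.add_mem ihx ihy
    | mul x y hx hy ihx ihy => rw [hDer]; exact B.add_mem (B.mul_mem ihx hy) (B.mul_mem hx ihy)
  set D' : B →ₗ[K] B := D.restrict hDB with hD'
  set La : B →ₗ[K] B := LinearMap.mulLeft K (⟨a, haB⟩ : B) with hLa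
  set Le : B →ₗ[K] B := LinearMap.mulLeft K (⟨e, heB⟩ : B) with hLe
  have hcomm : Le = D' * La - La * D' := by
    ext ⟨x, hx⟩
    have := hDer a x
    simp only [hLe, hLa, hD', LinearMap.sub_apply, Module.End.mul_apply,
      LinearMap.mulLeft_apply, LinearMap.restrict_apply]
    simp only [AddSubgroupClass.coe_sub, LinearMap.restrict_coe_apply, MulMemClass.coe_mul]
    show e * x = D (a * x) - a * D x
    rw [this, add_sub_cancel_right]
  have htr0 : LinearMap.trace K B Le = 0 := by
    rw [hcomm, map_sub, LinearMap.trace_mul_comm, sub_self]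
  have hidem : Le ∘ₗ Le = Le := by
    ext x
    simp only [hLe, LinearMap.comp_apply, LinearMap.mulLeft_apply]
    have hEE : (⟨e, heB⟩ : B) * ⟨e, heB⟩ = ⟨e, heB⟩ := Subtype.ext he
    rw [← mul_assoc, hEE]
  have hproj : LinearMap.IsProj (LinearMap.range Le) Le := by
    constructor
    · exact fun x => LinearMap.mem_range_self Le x
    · rintro x ⟨y, rfl⟩
      exact congrFun (congrArg DFunLike.coe hidem) y
  have htr := hproj.trace
  rw [htr0] at htr
  have : Module.finrank K (LinearMap.range Le) = 0 := by
    exact_mod_cast htr.symm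
  have hrange : LinearMap.range Le = ⊥ := Submodule.finrank_eq_zero.mp this
  have : Le 1 = 0 := by
    have := LinearMap.mem_range_self Le 1
    rw [hrange] at this
    simpa using this
  have : (⟨e, heB⟩ : B) = 0 := by simpa [hLe] using this
  exact congrArg Subtype.val this
end

section
/- Let K be a field of characteristic zero and A a unital K-algebra such that every K-subalgebra of A generated by finitely many elements is finite dimensional over K. If φ is a locally finite K-algebra automorphism of A, then the image of the map I − φ (where I is the identity map of A) contains no nonzero idempotent of A, i.e., for every e ∈ A with e^2 = e and e ∈ (I − φ)(A), one has e = 0. -/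
/-- If φ is a locally finite K-algebra automorphism of A (with A satisfying the
condition (KC)), then the image of I − φ contains no nonzero idempotent of A. -/
theorem lfed_automorphism_no_idempotent
    (K : Type*) [Field K] [CharZero K]
    (A : Type*) [Ring A] [Algebra K A]
    (hKC : ∀ s : Finset A, FiniteDimensional K (Algebra.adjoin K (s : Set A)))
    (φ : A ≃ₐ[K] A)
    (hLF : ∀ a : A,
      FiniteDimensional K (Submodule.span K (Set.range fun i : ℕ => (φ ^ i) a)))
    (e : A) (he : e * e = e) (heIm : ∃ x : A, e = x - φ x) :
    e = 0 := by
  obtain ⟨x, hx⟩ := heIm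
  set V : Submodule K A := Submodule.span K (Set.range fun i : ℕ => (φ ^ i) x) with hV
  haveI : FiniteDimensional K V := hLF x
  obtain ⟨t, ht⟩ := (Submodule.fg_iff_finiteDimensional V).2 (hLF x)
  set B : Subalgebra K A := Algebra.adjoin K (V : Set A) with hB
  have hBt : Algebra.adjoin K (t : Set A) = B := by
    rw [hB, ← ht, Algebra.adjoin_span]
  haveI hfinB : FiniteDimensional K B := by
    rw [← hBt]; exact hKC t
  -- membership facts
  have hmemV : ∀ i : ℕ, (φ ^ i) x ∈ V := fun i =>
    Submodule.subset_span ⟨i, rfl⟩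
  have hVB : (V : Set A) ⊆ (B : Set A) := Algebra.subset_adjoin
  have hxB : x ∈ B := hVB (by simpa using hmemV 0)
  have hφxB : φ x ∈ B := hVB (by simpa [pow_one] using hmemV 1)
  have heB : e ∈ B := by rw [hx]; exact sub_mem hxB hφxB
  -- φ maps V into V
  have hφV : ∀ v ∈ V, φ v ∈ V := by
    intro v hv
    have : V.map (φ : A →ₐ[K] A).toLinearMap ≤ V := by
      rw [hV, Submodule.map_span]
      apply Submodule.span_le.2
      rintro _ ⟨_, ⟨i, rfl⟩, rfl⟩
      simpa [hV, pow_succ', AlgEquiv.mul_apply] using hmemV (i + 1)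
    exact this ⟨v, hv, rfl⟩
  -- φ maps B into B
  have hφB : ∀ b ∈ B, φ b ∈ B := by
    intro b hb
    have : B.map (φ : A →ₐ[K] A) ≤ B := by
      rw [hB, AlgHom.map_adjoin]
      exact Algebra.adjoin_mono (fun a ⟨v, hv, hva⟩ => hva ▸ hφV v hv)
    exact this ⟨b, hb, rfl⟩
  -- the restricted algebra endomorphism of B
  set ψ₀ : B →ₐ[K] B :=
    ((φ : A →ₐ[K] A).comp B.val).codRestrict B (fun b => hφB b b.2) with hψ₀
  have hψ₀inj : Function.Injective ψ₀ := by
    intro a b hab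
    apply Subtype.ext
    have := congrArg Subtype.val hab
    exact φ.injective this
  have hψ₀bij : Function.Bijective ψ₀.toLinearMap :=
    ⟨hψ₀inj, (LinearMap.injective_iff_surjective).1 hψ₀inj⟩
  set ψ : B ≃ₗ[K] B := LinearEquiv.ofBijective ψ₀.toLinearMap hψ₀bij with hψ
  have hψapply : ∀ b : B, (ψ b : A) = φ b := fun b => rfl
  set eB : B := ⟨e, heB⟩ with heBdef
  set xB : B := ⟨x, hxB⟩ with hxBdef
  have hexB : eB = xB - ψ xB := by
    apply Subtype.ext
    simpa [hψapply] using hx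
  -- multiplication operator
  set f : B →ₗ[K] B := LinearMap.mulLeft K eB with hf
  -- trace of f is zero
  have hmulconj : LinearMap.mulLeft K (ψ xB) = ψ.conj (LinearMap.mulLeft K xB) := by
    ext b
    simp only [LinearMap.mulLeft_apply, LinearEquiv.conj_apply, LinearMap.comp_apply,
      LinearEquiv.coe_coe, LinearMap.mulLeft_apply]
    have h2 : φ ((ψ.symm b : B) : A) = (b : A) := by
      rw [← hψapply]
      exact congrArg Subtype.val (ψ.apply_symm_apply b)
    simp [hψapply, map_mul, h2]
  have htr0 : LinearMap.trace K B f = 0 := by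
    have hsub : f = LinearMap.mulLeft K xB - LinearMap.mulLeft K (ψ xB) := by
      ext b
      simp [hf, hexB, sub_mul]
    rw [hsub, map_sub, hmulconj, LinearMap.trace_conj', sub_self]
  -- f is a projection
  have hff : f ∘ₗ f = f := by
    ext b
    have : eB * eB = eB := Subtype.ext he
    simp [hf, ← mul_assoc, this]
  obtain ⟨p, hp⟩ := (LinearMap.isProj_iff_isIdempotentElem f).2 hff
  have htr : LinearMap.trace K B f = (Module.finrank K p : K) := hp.trace
  have hrank : Module.finrank K p = 0 := by
    have : (Module.finrank K p : K) = 0 := by rw [← htr, htr0]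
    exact_mod_cast this
  have hpbot : p = ⊥ := Submodule.finrank_eq_zero.1 hrank
  have hfe : f 1 = 0 := by
    have := hp.map_mem 1
    rw [hpbot] at this
    simpa using this
  have : eB = 0 := by simpa [hf] using hfe
  exact congrArg Subtype.val this
end

section
/- Let K be a field of characteristic zero and A a unital K-algebra such that every K-subalgebra of A generated by finitely many elements is finite dimensional over K. If D is a locally nilpotent K-derivation of A, then for every K-subspace V of A, the image D(V) is a Mathieu subspace of A. -/
open Polynomial Module LinearMap


/-- Over an algebraically closed field of characteristic zero, an endomorphism whose
eigenvalues are all roots of a fixed nonzero polynomial `p`, and whose power traces vanish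
up to `p.natDegree`, is nilpotent. -/
lemma core_nilpotent {F : Type*} [Field F] [IsAlgClosed F] [CharZero F]
    {W : Type*} [AddCommGroup W] [Module F W] [FiniteDimensional F W]
    (T : Module.End F W) (p : F[X]) (hp : p ≠ 0)
    (hroot : ∀ μ : F, T.HasEigenvalue μ → p.IsRoot μ)
    (htr : ∀ m : ℕ, 1 ≤ m → m ≤ p.natDegree → trace F W (T ^ m) = 0) :
    IsNilpotent T := by
  classical
  set N : F → Submodule F W := fun μ => T.maxGenEigenspace μ with hNdef
  have hmt : ∀ μ, Set.MapsTo T (N μ) (N μ) := fun μ =>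
    T.mapsTo_maxGenEigenspace_of_comm rfl μ
  have hmtm : ∀ (m : ℕ) (μ), Set.MapsTo (T ^ m) (N μ) (N μ) := fun m μ =>
    T.mapsTo_maxGenEigenspace_of_comm ((Commute.refl T).pow_right m) μ
  have hds : DirectSum.IsInternal N :=
    DirectSum.isInternal_submodule_of_iSupIndep_of_iSup_eq_top
      T.independent_maxGenEigenspace T.iSup_maxGenEigenspace_eq_top
  have hfin : {μ | N μ ≠ ⊥}.Finite :=
    WellFoundedGT.finite_ne_bot_of_iSupIndep T.independent_maxGenEigenspace
  -- trace of the restriction of `T ^ m` to a generalized eigenspace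
  have key : ∀ (μ : F) (m : ℕ),
      trace F (N μ) ((T ^ m).restrict (hmtm m μ)) = μ ^ m * (finrank F (N μ) : F) := by
    intro μ m
    induction m with
    | zero =>
        have h0 : (T ^ 0).restrict (hmtm 0 μ) = LinearMap.id := by
          ext x; simp [LinearMap.restrict_apply]
        rw [h0, trace_id, pow_zero, one_mul]
    | succ m ih =>
        have hcomp : (T ^ (m + 1)).restrict (hmtm (m + 1) μ)
            = ((T ^ m).restrict (hmtm m μ)) ∘ₗ (T.restrict (hmt μ)) := by
          ext x
          simp [LinearMap.restrict_apply, pow_succ, Module.End.mul_apply, LinearMap.coe_restrict_apply]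
          rfl
        have hnil : IsNilpotent ((T.restrict (hmt μ)) - algebraMap F _ μ) := by
          have h1 := T.isNilpotent_restrict_maxGenEigenspace_sub_algebraMap μ
          have h2 : (T - algebraMap F (Module.End F W) μ).restrict
              (T.mapsTo_maxGenEigenspace_of_comm (Algebra.mul_sub_algebraMap_commutes T μ) μ)
              = (T.restrict (hmt μ)) - algebraMap F _ μ := by
            ext x
            simp [LinearMap.restrict_apply, LinearMap.sub_apply, Module.algebraMap_end_apply,
              LinearMap.coe_restrict_apply]
            rfl
          rwa [h2] at h1
        have hcomm : Commute ((T ^ m).restrict (hmtm m μ)) (T.restrict (hmt μ)) :=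
          LinearMap.restrict_commute ((Commute.refl T).pow_left m) _ _
        rw [hcomp, LinearMap.trace_comp_eq_mul_of_commute_of_isNilpotent μ hcomm hnil, ih]
        ring
  have hsum : ∀ m : ℕ, trace F W (T ^ m)
      = ∑ μ ∈ hfin.toFinset, μ ^ m * (finrank F (N μ) : F) := by
    intro m
    rw [trace_eq_sum_trace_restrict' hds hfin (hmtm m)]
    exact Finset.sum_congr rfl fun μ _ => key μ m
  have heig : ∀ μ : F, N μ ≠ ⊥ → T.HasEigenvalue μ := by
    intro μ hμ
    obtain ⟨x, hx, hx0⟩ := Submodule.ne_bot_iff _ |>.mp hμ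
    obtain ⟨k, hk⟩ := (Module.End.mem_maxGenEigenspace T μ x).mp hx
    refine Module.End.hasEigenvalue_of_hasGenEigenvalue (k := k) ?_
    rw [Module.End.hasGenEigenvalue_iff]
    rw [Submodule.ne_bot_iff]
    exact ⟨x, Module.End.mem_genEigenspace_nat.mpr (LinearMap.mem_ker.mpr hk), hx0⟩
  -- all eigenvalues are zero
  have hzero : ∀ μ ∈ hfin.toFinset, μ = 0 := by
    by_contra hcon
    push_neg at hcon
    obtain ⟨μ0, hμ0E, hμ0⟩ := hcon
    set E' : Finset F := hfin.toFinset.filter (fun μ => μ ≠ 0) with hE'def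
    have hμ0E' : μ0 ∈ E' := Finset.mem_filter.mpr ⟨hμ0E, hμ0⟩
    have hNE : ∀ μ ∈ E', N μ ≠ ⊥ := fun μ hμ =>
      (Set.Finite.mem_toFinset hfin).mp (Finset.mem_filter.mp hμ).1
    -- cardinality bound
    have hcard : E'.card ≤ p.natDegree := by
      have hsub : E' ⊆ p.roots.toFinset := by
        intro μ hμ
        rw [Multiset.mem_toFinset, Polynomial.mem_roots hp]
        exact hroot μ (heig μ (hNE μ hμ))
      calc E'.card ≤ p.roots.toFinset.card := Finset.card_le_card hsub
        _ ≤ Multiset.card p.roots := Multiset.toFinset_card_le _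
        _ ≤ p.natDegree := Polynomial.card_roots' p
    -- vanishing power sums over the nonzero eigenvalues
    have hP : ∀ m : ℕ, 1 ≤ m → m ≤ p.natDegree →
        ∑ μ ∈ E', (finrank F (N μ) : F) * μ ^ m = 0 := by
      intro m h1 h2
      have h3 := htr m h1 h2
      rw [hsum m] at h3
      have h4 : ∑ μ ∈ E', μ ^ m * (finrank F (N μ) : F)
          = ∑ μ ∈ hfin.toFinset, μ ^ m * (finrank F (N μ) : F) := by
        refine Finset.sum_filter_of_ne fun μ hμ hne => ?_
        intro h0
        apply hne
        rw [h0, zero_pow (by omega), zero_mul]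
      rw [← h3, ← h4]
      exact Finset.sum_congr rfl fun μ _ => mul_comm _ _
    -- the interpolation polynomial
    set q : F[X] := X * ∏ ν ∈ E'.erase μ0, (X - C ν) with hqdef
    have hprodne : (∏ ν ∈ E'.erase μ0, (X - C ν) : F[X]) ≠ 0 :=
      (monic_prod_of_monic _ _ fun ν _ => monic_X_sub_C ν).ne_zero
    have hqdeg : q.natDegree ≤ p.natDegree := by
      have h1 : q.natDegree = 1 + (E'.erase μ0).card := by
        rw [hqdef, natDegree_mul X_ne_zero hprodne, natDegree_X]
        congr 1
        rw [natDegree_prod _ _ fun ν _ => X_sub_C_ne_zero ν]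
        simp [natDegree_X_sub_C]
      rw [h1, Finset.card_erase_of_mem hμ0E']
      have : 1 ≤ E'.card := Finset.card_pos.mpr ⟨μ0, hμ0E'⟩
      omega
    have hq0 : q.coeff 0 = 0 := by
      rw [hqdef, mul_coeff_zero, coeff_X_zero, zero_mul]
    -- main computation
    have hmain : ∑ μ ∈ E', (finrank F (N μ) : F) * q.eval μ = 0 := by
      have heval : ∀ μ : F, q.eval μ = ∑ m ∈ q.support, q.coeff m * μ ^ m := by
        intro μ; rw [eval_eq_sum, Polynomial.sum_def]
      calc ∑ μ ∈ E', (finrank F (N μ) : F) * q.eval μ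
          = ∑ μ ∈ E', ∑ m ∈ q.support, q.coeff m * ((finrank F (N μ) : F) * μ ^ m) := by
            refine Finset.sum_congr rfl fun μ _ => ?_
            rw [heval μ, Finset.mul_sum]
            exact Finset.sum_congr rfl fun m _ => by ring
        _ = ∑ m ∈ q.support, q.coeff m * ∑ μ ∈ E', ((finrank F (N μ) : F) * μ ^ m) := by
            rw [Finset.sum_comm]
            exact Finset.sum_congr rfl fun m _ => by rw [Finset.mul_sum]
        _ = 0 := by
            refine Finset.sum_eq_zero fun m hm => ?_
            have hm0 : m ≠ 0 := by
              intro h0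
              exact (Polynomial.mem_support_iff.mp hm) (h0 ▸ hq0)
            have hmd : m ≤ p.natDegree :=
              le_trans (Polynomial.le_natDegree_of_mem_supp m hm) hqdeg
            rw [hP m (Nat.one_le_iff_ne_zero.mpr hm0) hmd, mul_zero]
    have hqother : ∀ μ ∈ E', μ ≠ μ0 → q.eval μ = 0 := by
      intro μ hμ hne
      rw [hqdef, eval_mul, eval_prod]
      rw [Finset.prod_eq_zero (Finset.mem_erase.mpr ⟨hne, hμ⟩) (by simp)]
      rw [mul_zero]
    rw [Finset.sum_eq_single_of_mem μ0 hμ0E'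
      (fun μ hμ hne => by rw [hqother μ hμ hne, mul_zero])] at hmain
    -- but each factor is nonzero
    have hfr : (finrank F (N μ0) : F) ≠ 0 := by
      have : Nontrivial (N μ0) := Submodule.nontrivial_iff_ne_bot.mpr (hNE μ0 hμ0E')
      have : 0 < finrank F (N μ0) := finrank_pos_iff.mpr this
      exact Nat.cast_ne_zero.mpr (by omega)
    have hqeval : q.eval μ0 ≠ 0 := by
      rw [hqdef, eval_mul, eval_X, eval_prod]
      refine mul_ne_zero hμ0 (Finset.prod_ne_zero_iff.mpr fun ν hν => ?_)
      rw [eval_sub, eval_X, eval_C, sub_ne_zero]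
      exact fun h => (Finset.mem_erase.mp hν).1 h.symm
    exact (mul_ne_zero hfr hqeval) hmain
  -- conclude nilpotency
  have htop : T.maxGenEigenspace 0 = ⊤ := by
    have h1 := T.iSup_maxGenEigenspace_eq_top
    rw [← h1]
    refine le_antisymm (le_iSup _ 0) (iSup_le fun μ => ?_)
    by_cases h0 : μ = 0
    · subst h0; exact le_rfl
    · have : N μ = ⊥ := by
        by_contra hb
        exact h0 (hzero μ ((Set.Finite.mem_toFinset hfin).mpr hb))
      rw [hNdef] at this
      simp only [this]
      exact bot_le
  have hloc : ∀ x : W, ∃ n : ℕ, (T ^ n) x = 0 := by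
    intro x
    have hx : x ∈ T.maxGenEigenspace 0 := htop ▸ Submodule.mem_top
    obtain ⟨k, hk⟩ := (Module.End.mem_maxGenEigenspace T 0 x).mp hx
    refine ⟨k, ?_⟩
    simpa using hk
  exact ((LinearMap.charpoly_nilpotent_tfae T).out 2 0).mp hloc

section Aux
variable {K : Type*} [Field K] {A : Type*} [Ring A] [Algebra K A]

lemma deriv_one_eq_zero (D : A →ₗ[K] A)
    (hDer : ∀ a b : A, D (a * b) = D a * b + a * D b) : D 1 = 0 := by
  have h := hDer 1 1
  rw [mul_one, one_mul, mul_one] at h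
  exact add_eq_left.mp h.symm

lemma adjoin_deriv_stable (D : A →ₗ[K] A)
    (hDer : ∀ a b : A, D (a * b) = D a * b + a * D b) (S : Set A)
    (hS : ∀ x ∈ S, D x ∈ Algebra.adjoin K S) :
    ∀ x ∈ Algebra.adjoin K S, D x ∈ Algebra.adjoin K S := by
  have hD1 : D 1 = 0 := deriv_one_eq_zero D hDer
  intro x hx
  induction hx using Algebra.adjoin_induction with
  | mem y hy => exact hS y hy
  | algebraMap r =>
      have : algebraMap K A r = r • (1 : A) := by rw [Algebra.algebraMap_eq_smul_one]
      rw [this, map_smul, hD1, smul_zero]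
      exact zero_mem _
  | add y z hy hz ihy ihz =>
      rw [map_add]; exact add_mem ihy ihz
  | mul y z hy hz ihy ihz =>
      rw [hDer y z]
      exact add_mem (mul_mem ihy hz) (mul_mem hy ihz)

end Aux


/-- A K-subspace `V` of `A` is a Mathieu subspace of `A` if for all `a b c : A` such that
`a ^ m ∈ V` for all `m ≥ 1`, there exists `N ≥ 1` such that `b * a ^ m * c ∈ V` for all
`m ≥ N`. -/
def IsMathieuSubspace {K : Type*} [Field K] {A : Type*} [Ring A] [Algebra K A]
    (V : Submodule K A) : Prop :=
  ∀ a b c : A, (∀ m : ℕ, 1 ≤ m → a ^ m ∈ V) →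
    ∃ N : ℕ, 1 ≤ N ∧ ∀ m : ℕ, N ≤ m → b * a ^ m * c ∈ V

open Algebra in
set_option maxHeartbeats 1000000 in
/-- If D is a locally nilpotent K-derivation of A (with A satisfying (KC)),
then for every K-subspace V of A, the image D(V) is a Mathieu subspace of A. -/
theorem lned_derivation
    (K : Type*) [Field K] [CharZero K]
    (A : Type*) [Ring A] [Algebra K A]
    (hKC : ∀ s : Finset A, FiniteDimensional K (Algebra.adjoin K (s : Set A)))
    (D : A →ₗ[K] A)
    (hDer : ∀ a b : A, D (a * b) = D a * b + a * D b)
    (hLN : ∀ a : A, ∃ m : ℕ, 1 ≤ m ∧ (D ^ m) a = 0)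
    (V : Submodule K A) :
    IsMathieuSubspace (Submodule.map D V) := by
  unfold IsMathieuSubspace
  classical
  intro a b c h
  suffices hnil : IsNilpotent a by
    obtain ⟨k, hk⟩ := hnil
    refine ⟨k + 1, by omega, fun m hm => ?_⟩
    have hz : a ^ m = 0 := by
      have h1 : a ^ m = a ^ k * a ^ (m - k) := by rw [← pow_add]; congr 1; omega
      rw [h1, hk, zero_mul]
    rw [hz, mul_zero, zero_mul]
    exact Submodule.zero_mem _
  -- `a` is integral over `K`
  haveI hfd1 : FiniteDimensional K (Algebra.adjoin K ({a} : Set A)) := by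
    have := hKC {a}
    rwa [Finset.coe_singleton] at this
  have haint : IsIntegral K a := by
    refine IsIntegral.of_mem_of_fg (Algebra.adjoin K ({a} : Set A)) ?_
      a (Algebra.self_mem_adjoin_singleton K a)
    exact Module.Finite.iff_fg.mp hfd1
  set pa : K[X] := minpoly K a with hpadef
  have hpa0 : pa ≠ 0 := minpoly.ne_zero haint
  -- choose preimages of powers of `a`
  have hveq : ∀ m : ℕ, 1 ≤ m → ∃ y : A, D y = a ^ m := by
    intro m hm
    obtain ⟨y, -, hy⟩ := Submodule.mem_map.mp (h m hm)
    exact ⟨y, hy⟩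
  choose! w hw using hveq
  -- a finite `D`-closed generating set
  set nn : A → ℕ := fun x => (hLN x).choose with hnndef
  have hnn : ∀ x : A, 1 ≤ nn x ∧ (D ^ nn x) x = 0 := fun x => (hLN x).choose_spec
  set G : Finset A := insert a ((Finset.Icc 1 pa.natDegree).image w) with hGdef
  set S : Finset A := G.biUnion (fun x => (Finset.range (nn x)).image fun i => (D ^ i) x)
    with hSdef
  have hGS : ∀ x ∈ G, x ∈ S := by
    intro x hx
    refine Finset.mem_biUnion.mpr ⟨x, hx, Finset.mem_image.mpr
      ⟨0, Finset.mem_range.mpr (hnn x).1, by simp⟩⟩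
  set C : Subalgebra K A := Algebra.adjoin K (S : Set A) with hCdef
  haveI hCfd : FiniteDimensional K C := hKC S
  have hSD : ∀ x ∈ (S : Set A), D x ∈ C := by
    intro y hy
    obtain ⟨x, hxG, hyx⟩ := Finset.mem_biUnion.mp (Finset.mem_coe.mp hy)
    obtain ⟨i, hi, rfl⟩ := Finset.mem_image.mp hyx
    rw [Finset.mem_range] at hi
    have hstep : D ((D ^ i) x) = (D ^ (i + 1)) x := by
      rw [pow_succ']; rfl
    rcases Nat.lt_or_ge (i + 1) (nn x) with hlt | hge
    · rw [hstep]
      exact Algebra.subset_adjoin (Finset.mem_coe.mpr (Finset.mem_biUnion.mpr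
        ⟨x, hxG, Finset.mem_image.mpr ⟨i + 1, Finset.mem_range.mpr hlt, rfl⟩⟩))
    · have heq : i + 1 = nn x := by omega
      rw [hstep, heq, (hnn x).2]
      exact zero_mem _
  have hDC : ∀ x ∈ C, D x ∈ C := adjoin_deriv_stable D hDer _ hSD
  have haC : a ∈ C := Algebra.subset_adjoin (hGS a (Finset.mem_insert_self _ _))
  have hwC : ∀ m : ℕ, 1 ≤ m → m ≤ pa.natDegree → w m ∈ C := fun m h1 h2 =>
    Algebra.subset_adjoin (hGS _ (Finset.mem_insert_of_mem
      (Finset.mem_image.mpr ⟨m, Finset.mem_Icc.mpr ⟨h1, h2⟩, rfl⟩)))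
  -- the derivation and left multiplication as endomorphisms of `C`
  set DC : C →ₗ[K] C :=
    { toFun := fun x => ⟨D x, hDC x x.2⟩
      map_add' := fun x y => by ext; simp
      map_smul' := fun r x => by ext; simp } with hDCdef
  set aC : C := ⟨a, haC⟩ with haCdef
  set TC : Module.End K C := Algebra.lmul K C aC with hTCdef
  -- trace of powers of `TC` vanish in the relevant range
  have htrC : ∀ m : ℕ, 1 ≤ m → m ≤ pa.natDegree → trace K C (TC ^ m) = 0 := by
    intro m h1 h2
    set wC : C := ⟨w m, hwC m h1 h2⟩ with hwCdef
    have hcomm : TC ^ m = DC * (Algebra.lmul K C wC) - (Algebra.lmul K C wC) * DC := by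
      rw [hTCdef, ← map_pow]
      ext x
      have hd := hDer (w m) (x : A)
      rw [hw m h1] at hd
      have hDCapp : ∀ y : C, ((DC y : C) : A) = D (y : A) := fun y => rfl
      have hlm : ∀ y z : C, (Algebra.lmul K C y) z = y * z := fun _ _ => rfl
      simp only [LinearMap.sub_apply, Module.End.mul_apply, hlm, AddSubgroupClass.coe_sub,
        MulMemClass.coe_mul, SubmonoidClass.coe_pow, hDCapp]
      show a ^ m * (x : A) = D ((w m) * (x : A)) - w m * D (x : A)
      rw [hd, add_sub_cancel_right]
    rw [hcomm, map_sub, trace_mul_comm, sub_self]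
  -- pass to matrices over the algebraic closure
  set n : ℕ := finrank K C with hndef
  set bC : Basis (Fin n) K C := Module.finBasis K C with hbCdef
  set M0 : Matrix (Fin n) (Fin n) K := LinearMap.toMatrixAlgEquiv bC TC with hM0def
  set F := AlgebraicClosure K with hFdef
  haveI hFchar : CharZero F := charZero_of_injective_algebraMap (algebraMap K F).injective
  set ψ : Matrix (Fin n) (Fin n) K →ₐ[K] Matrix (Fin n) (Fin n) F :=
    (Algebra.ofId K F).mapMatrix with hψdef
  set M1 : Matrix (Fin n) (Fin n) F := ψ M0 with hM1def
  set T1 : Module.End F (Fin n → F) := Matrix.toLinAlgEquiv' M1 with hT1def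
  set pF : F[X] := pa.map (algebraMap K F) with hpFdef
  have hpF0 : pF ≠ 0 := Polynomial.map_ne_zero hpa0
  have hpFdeg : pF.natDegree = pa.natDegree := Polynomial.natDegree_map (algebraMap K F)
  -- the minimal polynomial annihilates everything in sight
  have h1 : Polynomial.aeval aC pa = 0 := by
    apply Subtype.ext
    show ((Polynomial.aeval aC pa : C) : A) = (0 : A)
    have h2 : C.val (Polynomial.aeval aC pa) = Polynomial.aeval a pa :=
      (Polynomial.aeval_algHom_apply C.val aC pa).symm
    rw [show ((Polynomial.aeval aC pa : C) : A) = C.val (Polynomial.aeval aC pa) from rfl, h2,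
      hpadef, minpoly.aeval K a]
  have h2 : Polynomial.aeval TC pa = 0 := by
    rw [hTCdef, Polynomial.aeval_algHom_apply (Algebra.lmul K C) aC pa, h1, map_zero]
  have h3 : Polynomial.aeval M0 pa = 0 := by
    rw [hM0def, Polynomial.aeval_algHom_apply (LinearMap.toMatrixAlgEquiv bC) TC pa, h2, map_zero]
  have h4 : Polynomial.aeval M1 pa = 0 := by
    rw [hM1def, Polynomial.aeval_algHom_apply ψ M0 pa, h3, map_zero]
  have h5 : Polynomial.aeval T1 pF = 0 := by
    rw [hT1def, Polynomial.aeval_algHom_apply (Matrix.toLinAlgEquiv' (R := F) (n := Fin n)) M1 pF,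
      hpFdef, Polynomial.aeval_map_algebraMap, h4, map_zero]
  have hroot : ∀ μ : F, T1.HasEigenvalue μ → pF.IsRoot μ := fun μ hμ =>
    (Module.End.isRoot_of_hasEigenvalue hμ).dvd (minpoly.dvd F T1 h5)
  -- traces of powers of `T1` vanish
  have htr1 : ∀ m : ℕ, 1 ≤ m → m ≤ pF.natDegree → trace F (Fin n → F) (T1 ^ m) = 0 := by
    intro m h1m h2m
    rw [hpFdeg] at h2m
    have e1 : T1 ^ m = Matrix.toLinAlgEquiv' (M1 ^ m) := by rw [hT1def, map_pow]
    have e2 : trace F (Fin n → F) (Matrix.toLinAlgEquiv' (M1 ^ m)) = Matrix.trace (M1 ^ m) := by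
      rw [trace_eq_matrix_trace F (Pi.basisFun F (Fin n)), LinearMap.toMatrix_eq_toMatrix']
      congr 1
      have : (Matrix.toLinAlgEquiv' (M1 ^ m) : (Fin n → F) →ₗ[F] (Fin n → F))
          = Matrix.toLin' (M1 ^ m) := by
        apply LinearMap.ext
        intro v
        rw [Matrix.toLinAlgEquiv'_apply, Matrix.toLin'_apply]
      rw [this, LinearMap.toMatrix'_toLin']
    have e3 : Matrix.trace (M1 ^ m) = algebraMap K F (Matrix.trace (M0 ^ m)) := by
      have hmp : M1 ^ m = (M0 ^ m).map (algebraMap K F) := by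
        rw [hM1def, ← map_pow ψ]
        rfl
      rw [hmp]
      simp [Matrix.trace, Matrix.diag, Matrix.map_apply, map_sum]
    have e4 : Matrix.trace (M0 ^ m) = trace K C (TC ^ m) := by
      rw [trace_eq_matrix_trace K bC]
      congr 1
      rw [hM0def, ← map_pow (LinearMap.toMatrixAlgEquiv bC)]
      rfl
    rw [e1, e2, e3, e4, htrC m h1m h2m, map_zero]
  -- conclude
  have hT1nil : IsNilpotent T1 := core_nilpotent T1 pF hpF0 hroot htr1
  have hM1nil : IsNilpotent M1 := by
    have hmap := hT1nil.map (Matrix.toLinAlgEquiv' (R := F) (n := Fin n)).symm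
    rwa [hT1def, AlgEquiv.symm_apply_apply] at hmap
  have hM0nil : IsNilpotent M0 := by
    obtain ⟨k, hk⟩ := hM1nil
    refine ⟨k, ?_⟩
    have h0 : ψ (M0 ^ k) = 0 := by rw [map_pow]; exact hk
    ext i j
    apply (algebraMap K F).injective
    have hentry : (ψ (M0 ^ k)) i j = 0 := by rw [h0]; rfl
    have hmap : (ψ (M0 ^ k)) i j = algebraMap K F ((M0 ^ k) i j) := rfl
    rw [← hmap, hentry, Matrix.zero_apply, map_zero]
  have hTCnil : IsNilpotent TC := by
    have hmap := hM0nil.map (LinearMap.toMatrixAlgEquiv bC).symm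
    rwa [hM0def, AlgEquiv.symm_apply_apply] at hmap
  have haCnil : IsNilpotent aC := by
    obtain ⟨k, hk⟩ := hTCnil
    refine ⟨k, ?_⟩
    have hlm : Algebra.lmul K C (aC ^ k) = 0 := by
      rw [map_pow, ← hTCdef]
      exact hk
    have h1 := congrArg (fun f : Module.End K C => f 1) hlm
    simp only [LinearMap.zero_apply] at h1
    have h2 : aC ^ k * 1 = (0 : C) := h1
    rwa [mul_one] at h2
  have : IsNilpotent (C.val aC) := haCnil.map C.val
  exact this
end

section
/- Let K be a field of characteristic zero and A a unital K-algebra such that every K-subalgebra of A generated by finitely many elements is finite dimensional over K. Let φ be a K-algebra endomorphism of A such that the map δ = I − φ is locally nilpotent. Then for every K-subspace V of A, the image δ(V) is a Mathieu subspace of A. -/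
section Aux

/-- An antitone sequence of naturals has two equal consecutive values at index ≥ 1. -/
lemma exists_succ_eq_of_antitone (g : ℕ → ℕ) (hg : ∀ i j, i ≤ j → g j ≤ g i) :
    ∃ n, 1 ≤ n ∧ g (n + 1) = g n := by
  by_contra h
  push_neg at h
  have key : ∀ k, g (1 + k) + k ≤ g 1 := by
    intro k
    induction k with
    | zero => simp
    | succ k ih =>
      have hlt : g (1 + k + 1) < g (1 + k) :=
        lt_of_le_of_ne (hg _ _ (by omega)) (h (1 + k) (by omega))
      have : g (1 + (k + 1)) = g (1 + k + 1) := by ring_nf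
      omega
  have := key (g 1 + 1)
  omega

/-- An idempotent endomorphism of a finite-dimensional space over a char-zero field
with zero trace is zero. -/
lemma idem_trace_zero {K V : Type*} [Field K] [CharZero K] [AddCommGroup V] [Module K V]
    [FiniteDimensional K V] (f : V →ₗ[K] V) (hf : f ∘ₗ f = f)
    (ht : LinearMap.trace K V f = 0) : f = 0 := by
  obtain ⟨p, hp⟩ := (LinearMap.isProj_iff_isIdempotentElem f).mpr hf
  rw [hp.trace] at ht
  have hp0 : Module.finrank K p = 0 := by exact_mod_cast ht
  have hbot : p = ⊥ := Submodule.finrank_eq_zero.mp hp0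
  ext x
  have := hp.map_mem x
  rw [hbot, Submodule.mem_bot] at this
  simpa using this

end Aux

section Idem

variable (K : Type*) [Field K] [CharZero K]
    (A : Type*) [Ring A] [Algebra K A]

/-- Key lemma: an idempotent in the image of a locally nilpotent E-derivation is zero. -/
lemma idem_in_range_eq_zero
    (hKC : ∀ s : Finset A, FiniteDimensional K (Algebra.adjoin K (s : Set A)))
    (φ : A →ₐ[K] A)
    (hLN : ∀ a : A, ∃ m : ℕ, 1 ≤ m ∧
      ((LinearMap.id - φ.toLinearMap : A →ₗ[K] A) ^ m) a = 0)
    (e : A) (he : e * e = e)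
    (hmem : e ∈ LinearMap.range (LinearMap.id - φ.toLinearMap : A →ₗ[K] A)) :
    e = 0 := by
  classical
  set δ : A →ₗ[K] A := LinearMap.id - φ.toLinearMap with hδdef
  have hδ_apply : ∀ x : A, δ x = x - φ x := fun x => rfl
  obtain ⟨u, hu⟩ := hmem
  obtain ⟨m, hm1, hmu⟩ := hLN u
  set s : Finset A := (Finset.range (m + 1)).image (fun k => (δ ^ k) u) with hsdef
  set B := Algebra.adjoin K (s : Set A) with hBdef
  haveI : FiniteDimensional K B := hKC s
  have hgen : ∀ k, k ≤ m → (δ ^ k) u ∈ B := by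
    intro k hk
    apply Algebra.subset_adjoin
    simp only [hsdef, Finset.coe_image, Set.mem_image, Finset.mem_coe, Finset.mem_range]
    exact ⟨k, by omega, rfl⟩
  have hzero : ∀ k, m ≤ k → (δ ^ k) u = 0 := by
    intro k hk
    have : δ ^ k = δ ^ (k - m) * δ ^ m := by rw [← pow_add]; congr 1; omega
    rw [this, Module.End.mul_apply, hmu, map_zero]
  have huB : u ∈ B := by simpa using hgen 0 (by omega)
  have heB : e ∈ B := by
    have := hgen 1 hm1
    rwa [pow_one, hu] at this
  have hφB : ∀ x ∈ B, φ x ∈ B := by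
    intro x hx
    induction hx using Algebra.adjoin_induction with
    | mem x hx =>
      simp only [hsdef, Finset.coe_image, Set.mem_image, Finset.mem_coe, Finset.mem_range] at hx
      obtain ⟨k, hk, rfl⟩ := hx
      have h1 : φ ((δ ^ k) u) = (δ ^ k) u - (δ ^ (k + 1)) u := by
        have : (δ ^ (k + 1)) u = δ ((δ ^ k) u) := by
          rw [pow_succ']; rfl
        rw [this, hδ_apply, sub_sub_cancel]
      rw [h1]
      rcases le_or_gt (k + 1) m with h | h
      · exact sub_mem (hgen k (by omega)) (hgen (k + 1) h)
      · rw [hzero (k + 1) (by omega)]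
        exact sub_mem (hgen k (by omega)) (zero_mem _)
    | algebraMap r => rw [φ.commutes]; exact Subalgebra.algebraMap_mem _ _
    | add x y hx hy ihx ihy => rw [map_add]; exact add_mem ihx ihy
    | mul x y hx hy ihx ihy => rw [map_mul]; exact mul_mem ihx ihy
  have hδB : ∀ x ∈ B, δ x ∈ B := by
    intro x hx
    rw [hδ_apply]
    exact sub_mem hx (hφB x hx)
  -- restrictions to B
  set δB : B →ₗ[K] B :=
    { toFun := fun x => ⟨δ x, hδB x x.2⟩
      map_add' := fun x y => Subtype.ext (by simp)
      map_smul' := fun c x => Subtype.ext (by simp) } with hδBdef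
  set φB : B →ₗ[K] B :=
    { toFun := fun x => ⟨φ x, hφB x x.2⟩
      map_add' := fun x y => Subtype.ext (by simp)
      map_smul' := fun c x => Subtype.ext (by simp) } with hφBdef
  have hδB_coe : ∀ x : B, ((δB x : B) : A) = δ (x : A) := fun _ => rfl
  have hφB_coe : ∀ x : B, ((φB x : B) : A) = φ (x : A) := fun _ => rfl
  have hpow_coe : ∀ (k : ℕ) (x : B), (((δB ^ k) x : B) : A) = (δ ^ k) (x : A) := by
    intro k
    induction k with
    | zero => intro x; simp
    | succ k ih =>
      intro x
      rw [pow_succ, pow_succ, Module.End.mul_apply, Module.End.mul_apply, ih, hδB_coe]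
  -- δB is nilpotent
  obtain ⟨t, ht⟩ : (⊤ : Submodule K B).FG := Module.finite_def.mp inferInstance
  choose mf hmf1 hmf2 using hLN
  have hdel : ∀ (x : A) (k : ℕ), mf x ≤ k → (δ ^ k) x = 0 := by
    intro x k hk
    have : δ ^ k = δ ^ (k - mf x) * δ ^ (mf x) := by rw [← pow_add]; congr 1; omega
    rw [this, Module.End.mul_apply, hmf2, map_zero]
  set M : ℕ := t.sup (fun x => mf (x : A)) with hMdef
  have key : ∀ y ∈ Submodule.span K (t : Set B), (δB ^ M) y = 0 := by
    intro y hy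
    induction hy using Submodule.span_induction with
    | mem y hy =>
      apply Subtype.ext
      rw [hpow_coe]
      simpa using hdel _ _ (Finset.le_sup (f := fun x : B => mf (x : A)) (by simpa using hy))
    | zero => simp
    | add y z hy hz ihy ihz => rw [map_add, ihy, ihz]; simp
    | smul c y hy ihy => rw [map_smul, ihy]; simp
  have hnil : δB ^ M = 0 := by
    ext x
    have := key x (by rw [ht]; trivial)
    simp [this]
  have hφB_eq : φB = 1 - δB := by
    apply LinearMap.ext
    intro x
    apply Subtype.ext
    show φ (x : A) = ((((1 : B →ₗ[K] B) - δB) x : B) : A)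
    rw [LinearMap.sub_apply, Module.End.one_apply, AddSubgroupClass.coe_sub, hδB_coe, hδ_apply,
      sub_sub_cancel]
  have hunit : IsUnit φB := by
    rw [hφB_eq]
    exact IsNilpotent.isUnit_one_sub ⟨M, hnil⟩
  obtain ⟨w, hw⟩ := hunit
  set u' : B := ⟨u, huB⟩ with hu'def
  set e' : B := ⟨e, heB⟩ with he'def
  have hφmul : ∀ x y : B, φB (x * y) = φB x * φB y := by
    intro x y
    apply Subtype.ext
    show φ ((x : A) * (y : A)) = φ (x : A) * φ (y : A)
    exact map_mul φ _ _
  have h1 : (w : B →ₗ[K] B) * LinearMap.mulLeft K u'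
      = LinearMap.mulLeft K (φB u') * (w : B →ₗ[K] B) := by
    rw [hw]
    apply LinearMap.ext
    intro y
    show φB (u' * y) = φB u' * φB y
    exact hφmul u' y
  have hconj : LinearMap.mulLeft K (φB u')
      = (w : B →ₗ[K] B) * LinearMap.mulLeft K u' * ((w⁻¹ : (B →ₗ[K] B)ˣ) : B →ₗ[K] B) := by
    rw [h1, Units.mul_inv_cancel_right]
  have htr1 : LinearMap.trace K B (LinearMap.mulLeft K (φB u'))
      = LinearMap.trace K B (LinearMap.mulLeft K u') := by
    rw [hconj]
    exact LinearMap.trace_conj K (LinearMap.mulLeft K u') w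
  have he'eq : e' = u' - φB u' := by
    apply Subtype.ext
    push_cast
    rw [hφB_coe]
    show e = u - φ u
    rw [← hu, hδ_apply]
  have hLe : LinearMap.mulLeft K e'
      = LinearMap.mulLeft K u' - LinearMap.mulLeft K (φB u') := by
    rw [he'eq]
    ext y
    simp [LinearMap.mulLeft_apply, sub_mul]
  have htr0 : LinearMap.trace K B (LinearMap.mulLeft K e') = 0 := by
    rw [hLe, map_sub, htr1, sub_self]
  have hidem : LinearMap.mulLeft K e' ∘ₗ LinearMap.mulLeft K e' = LinearMap.mulLeft K e' := by
    rw [← LinearMap.mulLeft_mul]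
    congr 1
    apply Subtype.ext
    show e * e = e
    exact he
  have h0 : LinearMap.mulLeft K e' = 0 := idem_trace_zero _ hidem htr0
  have : e' = 0 := by
    have := congrArg (fun f : B →ₗ[K] B => f 1) h0
    simpa [LinearMap.mulLeft_apply] using this
  exact congrArg (Subtype.val) this

end Idem

section Poly

variable {K : Type*} [Field K] {A : Type*} [Ring A] [Algebra K A]

lemma commute_aeval (a : A) (p : Polynomial K) : Commute a (Polynomial.aeval a p) := by
  induction p using Polynomial.induction_on' with
  | add p q hp hq => rw [map_add]; exact hp.add_right hq
  | monomial k c =>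
    rw [Polynomial.aeval_monomial]
    exact Commute.mul_right (Algebra.commutes c a).symm ((Commute.refl a).pow_right k)

lemma mul_aeval_mem_span (a : A) (n : ℕ) (r : Polynomial K) :
    a ^ n * Polynomial.aeval a r ∈
      Submodule.span K ((fun m => a ^ m) '' {m : ℕ | n ≤ m}) := by
  induction r using Polynomial.induction_on' with
  | add p q hp hq => rw [map_add, mul_add]; exact add_mem hp hq
  | monomial k c =>
    rw [Polynomial.aeval_monomial, ← Algebra.smul_def, mul_smul_comm, ← pow_add]
    exact Submodule.smul_mem _ _ (Submodule.subset_span ⟨n + k, by simp, rfl⟩)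

lemma exists_poly_of_mem_span (a : A) (n : ℕ) (x : A)
    (hx : x ∈ Submodule.span K ((fun m => a ^ m) '' {m : ℕ | n + 1 ≤ m})) :
    ∃ p : Polynomial K, x = a ^ (n + 1) * Polynomial.aeval a p := by
  induction hx using Submodule.span_induction with
  | mem y hy =>
    obtain ⟨m, hm, rfl⟩ := hy
    refine ⟨Polynomial.X ^ (m - (n + 1)), ?_⟩
    rw [map_pow, Polynomial.aeval_X, ← pow_add]
    congr 1
    simp only [Set.mem_setOf_eq] at hm
    omega
  | zero => exact ⟨0, by simp⟩
  | add y z hy hz ihy ihz =>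
    obtain ⟨p, hp⟩ := ihy; obtain ⟨q, hq⟩ := ihz
    exact ⟨p + q, by rw [map_add, mul_add, hp, hq]⟩
  | smul c y hy ihy =>
    obtain ⟨p, hp⟩ := ihy
    exact ⟨c • p, by rw [map_smul, mul_smul_comm, hp]⟩

end Poly

/-- Let φ be a K-algebra endomorphism of A (with A satisfying (KC)) such that
δ = I − φ is locally nilpotent. Then for every K-subspace V of A, δ(V) is a Mathieu
subspace of A. -/
theorem lned_E_derivation
    (K : Type*) [Field K] [CharZero K]
    (A : Type*) [Ring A] [Algebra K A]
    (hKC : ∀ s : Finset A, FiniteDimensional K (Algebra.adjoin K (s : Set A)))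
    (φ : A →ₐ[K] A)
    (hLN : ∀ a : A, ∃ m : ℕ, 1 ≤ m ∧
      ((LinearMap.id - φ.toLinearMap : A →ₗ[K] A) ^ m) a = 0)
    (V : Submodule K A) :
    IsMathieuSubspace (Submodule.map (LinearMap.id - φ.toLinearMap : A →ₗ[K] A) V) := by
  intro a b c ha
  set δ : A →ₗ[K] A := LinearMap.id - φ.toLinearMap with hδdef
  -- the ambient finite-dimensional space
  have hfin : FiniteDimensional K (Algebra.adjoin K ({a} : Set A)) := by
    have h := hKC ({a} : Finset A)
    rw [show (({a} : Finset A) : Set A) = ({a} : Set A) from Finset.coe_singleton a] at h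
    exact h
  have hfinC : FiniteDimensional K (Subalgebra.toSubmodule (Algebra.adjoin K ({a} : Set A))) :=
    Subalgebra.finiteDimensional_toSubmodule.mpr hfin
  set f : ℕ → Submodule K A :=
    fun k => Submodule.span K ((fun m => a ^ m) '' {m : ℕ | k ≤ m}) with hfdef
  have hfC : ∀ k, f k ≤ Subalgebra.toSubmodule (Algebra.adjoin K ({a} : Set A)) := by
    intro k
    rw [Submodule.span_le]
    rintro y ⟨m, _, rfl⟩
    show a ^ m ∈ Algebra.adjoin K ({a} : Set A)
    exact Subalgebra.pow_mem _ (Algebra.self_mem_adjoin_singleton K a) m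
  haveI hfink : ∀ k, FiniteDimensional K (f k) :=
    fun k => Submodule.finiteDimensional_of_le (hfC k)
  have hmono : ∀ i j, i ≤ j → f j ≤ f i := by
    intro i j hij
    exact Submodule.span_mono (Set.image_mono (fun m hm => le_trans hij hm))
  have hg : ∀ i j, i ≤ j → Module.finrank K (f j) ≤ Module.finrank K (f i) := by
    intro i j hij
    haveI := hfink i
    exact Submodule.finrank_mono (hmono i j hij)
  obtain ⟨n, hn1, hgn⟩ := exists_succ_eq_of_antitone (fun k => Module.finrank K (f k)) hg
  haveI := hfink n
  have hfeq : f (n + 1) = f n :=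
    Submodule.eq_of_le_of_finrank_eq (hmono n (n + 1) (Nat.le_succ n)) hgn
  have han : a ^ n ∈ f (n + 1) := by
    rw [hfeq]
    exact Submodule.subset_span ⟨n, le_refl n, rfl⟩
  obtain ⟨p, hp⟩ := exists_poly_of_mem_span a n (a ^ n) han
  set qa : A := Polynomial.aeval a p with hqadef
  have hcomm : Commute a qa := commute_aeval a p
  have hbase : a ^ n * (a * qa) = a ^ n := by
    rw [← mul_assoc, ← pow_succ]
    exact hp.symm
  have h1 : ∀ k, a ^ n * (a * qa) ^ k = a ^ n := by
    intro k
    induction k with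
    | zero => simp
    | succ k ih => rw [pow_succ', ← mul_assoc, hbase, ih]
  have hmp : (a * qa) ^ n = a ^ n * qa ^ n := hcomm.mul_pow n
  have hEE : (a * qa) ^ n * (a * qa) ^ n = (a * qa) ^ n := by
    have hc2 : Commute (qa ^ n) ((a * qa) ^ n) :=
      Commute.pow_pow (Commute.mul_right hcomm.symm (Commute.refl qa)) n n
    nth_rewrite 1 [hmp]
    rw [mul_assoc, hc2.eq, ← mul_assoc, h1 n, hmp]
  have hEmem : (a * qa) ^ n ∈ f n := by
    rw [hmp, show qa ^ n = Polynomial.aeval a (p ^ n) from (map_pow _ _ _).symm]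
    exact mul_aeval_mem_span a n (p ^ n)
  have hfW : f n ≤ Submodule.map δ V := by
    rw [Submodule.span_le]
    rintro y ⟨m, hm, rfl⟩
    exact ha m (le_trans hn1 hm)
  have hEW : (a * qa) ^ n ∈ Submodule.map δ V := hfW hEmem
  have hErange : (a * qa) ^ n ∈ LinearMap.range δ := by
    obtain ⟨v, _, hveq⟩ := hEW
    exact ⟨v, hveq⟩
  have he0 : (a * qa) ^ n = 0 :=
    idem_in_range_eq_zero K A hKC φ hLN _ hEE hErange
  have han0 : a ^ n = 0 := by
    rw [← h1 n, he0, mul_zero]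
  refine ⟨n, hn1, fun m hm => ?_⟩
  have hz : a ^ m = 0 := by
    rw [show m = n + (m - n) by omega, pow_add, han0, zero_mul]
  rw [hz, mul_zero, zero_mul]
  exact zero_mem _
end

section
/- Let K be a field of characteristic zero and A a unital K-algebra such that every K-subalgebra of A generated by finitely many elements is finite dimensional over K. If D is a locally finite K-derivation of A, then the image D(A) is a Mathieu subspace of A. -/
open Polynomial

section Aux

variable (K : Type*) [Field K] [CharZero K]
    (A : Type*) [Ring A] [Algebra K A]

/-- Key lemma: an idempotent in the image of a locally finite derivation is zero. -/
lemma idem_eq_zero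
    (hKC : ∀ s : Finset A, FiniteDimensional K (Algebra.adjoin K (s : Set A)))
    (D : A →ₗ[K] A)
    (hDer : ∀ a b : A, D (a * b) = D a * b + a * D b)
    (hLF : ∀ a : A,
      FiniteDimensional K (Submodule.span K (Set.range fun i : ℕ => (D ^ i) a)))
    (e : A) (he : e * e = e) (heD : e ∈ LinearMap.range D) : e = 0 := by
  classical
  obtain ⟨u, hu⟩ := heD
  set S1 : Submodule K A := Submodule.span K (Set.range fun i : ℕ => (D ^ i) e) with hS1
  set S2 : Submodule K A := Submodule.span K (Set.range fun i : ℕ => (D ^ i) u) with hS2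
  have horb : ∀ x : A, ∀ y ∈ Submodule.span K (Set.range fun i : ℕ => (D ^ i) x),
      D y ∈ Submodule.span K (Set.range fun i : ℕ => (D ^ i) x) := by
    intro x y hy
    have hle : Submodule.map D (Submodule.span K (Set.range fun i : ℕ => (D ^ i) x)) ≤
        Submodule.span K (Set.range fun i : ℕ => (D ^ i) x) := by
      rw [Submodule.map_span_le]
      rintro m ⟨i, rfl⟩
      refine Submodule.subset_span ⟨i + 1, ?_⟩
      show (D ^ (i + 1)) x = D ((D ^ i) x)
      rw [pow_succ', Module.End.mul_apply]
    exact hle ⟨y, hy, rfl⟩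
  have hfg1 : S1.FG := (Submodule.fg_top S1).mp (Module.finite_def.mp (hLF e))
  have hfg2 : S2.FG := (Submodule.fg_top S2).mp (Module.finite_def.mp (hLF u))
  obtain ⟨s1, hs1⟩ := hfg1
  obtain ⟨s2, hs2⟩ := hfg2
  set C : Subalgebra K A := Algebra.adjoin K ((s1 ∪ s2 : Finset A) : Set A) with hC
  haveI : FiniteDimensional K C := hKC (s1 ∪ s2)
  have hS1C : S1 ≤ Subalgebra.toSubmodule C := by
    rw [← hs1]
    exact Submodule.span_le.mpr fun x hx =>
      Algebra.subset_adjoin (by simp only [Finset.coe_union]; exact Set.mem_union_left _ hx)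
  have hS2C : S2 ≤ Subalgebra.toSubmodule C := by
    rw [← hs2]
    exact Submodule.span_le.mpr fun x hx =>
      Algebra.subset_adjoin (by simp only [Finset.coe_union]; exact Set.mem_union_right _ hx)
  have heS1 : e ∈ S1 := Submodule.subset_span ⟨0, by simp⟩
  have huS2 : u ∈ S2 := Submodule.subset_span ⟨0, by simp⟩
  have heC : e ∈ C := hS1C heS1
  have huC : u ∈ C := hS2C huS2
  have hD1 : D 1 = 0 := by
    have h := hDer 1 1
    simp only [one_mul, mul_one] at h
    nth_rewrite 1 [← add_zero (D 1)] at h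
    exact (add_left_cancel h).symm
  have hDC : ∀ x ∈ C, D x ∈ C := by
    intro x hx
    induction hx using Algebra.adjoin_induction with
    | mem y hy =>
      rcases (by simpa using hy : y ∈ (s1 : Set A) ∪ (s2 : Set A)) with h | h
      · have hyS1 : y ∈ S1 := by rw [← hs1]; exact Submodule.subset_span h
        exact hS1C (horb e y hyS1)
      · have hyS2 : y ∈ S2 := by rw [← hs2]; exact Submodule.subset_span h
        exact hS2C (horb u y hyS2)
    | algebraMap r =>
      rw [Algebra.algebraMap_eq_smul_one, map_smul, hD1, smul_zero]
      exact C.zero_mem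
    | add x y hx hy ihx ihy => rw [map_add]; exact C.add_mem ihx ihy
    | mul x y hx hy ihx ihy =>
      rw [hDer x y]
      exact C.add_mem (C.mul_mem ihx hy) (C.mul_mem hx ihy)
  set δ : C →ₗ[K] C :=
    { toFun := fun x => ⟨D x, hDC x x.2⟩
      map_add' := fun x y => by ext; simp
      map_smul' := fun c x => by ext; simp } with hδ
  set e' : C := ⟨e, heC⟩ with he'
  set u' : C := ⟨u, huC⟩ with hu'
  set Le : C →ₗ[K] C := LinearMap.mulLeft K e' with hLe
  set Lu : C →ₗ[K] C := LinearMap.mulLeft K u' with hLu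
  have hkey : Le = δ * Lu - Lu * δ := by
    ext x
    show e * (x : A) = D (u * (x : A)) - u * D (x : A)
    rw [hDer u (x : A), hu, add_sub_cancel_right]
  have htr : LinearMap.trace K C Le = 0 := by
    rw [hkey, map_sub, LinearMap.trace_mul_comm, sub_self]
  have hidem : Le ∘ₗ Le = Le := by
    ext x
    show e * (e * (x : A)) = e * (x : A)
    rw [← mul_assoc, he]
  obtain ⟨p, hp⟩ := (LinearMap.isProj_iff_isIdempotentElem Le).mpr hidem
  have htr2 : LinearMap.trace K C Le = (Module.finrank K p : K) := hp.trace
  rw [htr] at htr2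
  have hfr : Module.finrank K p = 0 := by exact_mod_cast htr2.symm
  have hbot : p = ⊥ := Submodule.finrank_eq_zero.mp hfr
  have h1 : Le ⟨1, C.one_mem⟩ = 0 := by
    have hm := hp.map_mem ⟨1, C.one_mem⟩
    rw [hbot] at hm
    simpa using hm
  have h2 : e * 1 = 0 := congrArg Subtype.val h1
  simpa using h2

end Aux

/-- If D is a locally finite K-derivation of A (with A satisfying (KC)),
then the image D(A) is a Mathieu subspace of A. -/
theorem lfed_derivation
    (K : Type*) [Field K] [CharZero K]
    (A : Type*) [Ring A] [Algebra K A]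
    (hKC : ∀ s : Finset A, FiniteDimensional K (Algebra.adjoin K (s : Set A)))
    (D : A →ₗ[K] A)
    (hDer : ∀ a b : A, D (a * b) = D a * b + a * D b)
    (hLF : ∀ a : A,
      FiniteDimensional K (Submodule.span K (Set.range fun i : ℕ => (D ^ i) a))) :
    IsMathieuSubspace (LinearMap.range D) := by
  intro a b c ha
  have hint : IsIntegral K a := by
    refine IsIntegral.of_mem_of_fg (Algebra.adjoin K {a}) ?_ a
      (Algebra.self_mem_adjoin_singleton K a)
    have hfd : FiniteDimensional K (Algebra.adjoin K ({a} : Set A)) := by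
      rw [← Finset.coe_singleton a]; exact hKC {a}
    exact (Submodule.fg_top _).mp (Module.finite_def.mp hfd)
  set p : K[X] := minpoly K a with hp
  have hpne : p ≠ 0 := minpoly.ne_zero hint
  set k : ℕ := p.rootMultiplicity 0 with hk
  set q : K[X] := p /ₘ (X - C 0) ^ k with hq
  have hpf : (X - C 0) ^ k * q = p := pow_mul_divByMonic_rootMultiplicity_eq p 0
  have hq0 : q.eval 0 ≠ 0 := eval_divByMonic_pow_rootMultiplicity_ne_zero 0 hpne
  have hXq : ¬ (X : K[X]) ∣ q := fun h => hq0 (by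
    rw [← Polynomial.coeff_zero_eq_eval_zero]; exact Polynomial.X_dvd_iff.mp h)
  set k' : ℕ := max k 1 with hk'
  have hco : IsCoprime ((X : K[X]) ^ k') q :=
    (Polynomial.irreducible_X.coprime_iff_not_dvd.mpr hXq).pow_left
  obtain ⟨f, g, hfg⟩ := hco
  set e : A := aeval a (f * X ^ k') with hedef
  have hpXk : p = X ^ k * q := by rw [← hpf]; simp
  have hpdvd : p ∣ (f * X ^ k') * (f * X ^ k' - 1) := by
    have h1 : f * X ^ k' - 1 = -(g * q) := by linear_combination hfg
    rw [h1]
    have h2 : p ∣ X ^ k' * q := by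
      rw [hpXk]
      exact mul_dvd_mul (pow_dvd_pow X (le_max_left k 1)) dvd_rfl
    have h3 : (f * X ^ k') * -(g * q) = -((f * g) * (X ^ k' * q)) := by ring
    rw [h3]
    exact Dvd.dvd.neg_right (Dvd.dvd.mul_left h2 (f * g))
  have he : e * e = e := by
    obtain ⟨r, hr⟩ := hpdvd
    have h0 : aeval a ((f * X ^ k') * (f * X ^ k' - 1)) = 0 := by
      rw [hr, map_mul, hp, minpoly.aeval, zero_mul]
    rw [map_mul, map_sub, map_one, mul_sub, mul_one, sub_eq_zero] at h0
    exact h0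
  have heD : e ∈ LinearMap.range D := by
    have h1 : e = ∑ i ∈ Finset.range (f.natDegree + 1), f.coeff i • a ^ (i + k') := by
      rw [hedef, map_mul, aeval_X_pow, Polynomial.aeval_eq_sum_range, Finset.sum_mul]
      exact Finset.sum_congr rfl fun i _ => by rw [smul_mul_assoc, pow_add]
    rw [h1]
    exact Submodule.sum_mem _ fun i _ =>
      Submodule.smul_mem _ _ (ha (i + k') ((le_max_right k 1).trans (Nat.le_add_left k' i)))
  have he0 : e = 0 := idem_eq_zero K A hKC D hDer hLF e he heD
  have hdvd : p ∣ f * X ^ k' := minpoly.dvd K a (by rw [← hedef]; exact he0)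
  have hqp : q ∣ p := ⟨(X - C 0) ^ k, by rw [← hpf]; ring⟩
  have hq1 : IsUnit q := by
    have h1 : q ∣ f * X ^ k' := hqp.trans hdvd
    have h2 : q ∣ g * q := Dvd.intro_left g rfl
    exact isUnit_of_dvd_one (hfg ▸ dvd_add h1 h2)
  obtain ⟨cu, hcu_unit, hcu⟩ := Polynomial.isUnit_iff.mp hq1
  have hcune : cu ≠ 0 := hcu_unit.ne_zero
  have hak : a ^ k = 0 := by
    have h1 : (aeval a) p = 0 := by rw [hp]; exact minpoly.aeval K a
    rw [hpXk, ← hcu, map_mul, aeval_X_pow, aeval_C] at h1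
    have h2 : cu • a ^ k = 0 := by
      rw [Algebra.smul_def, ← Algebra.commutes cu (a ^ k)] at *
      exact h1
    calc a ^ k = cu⁻¹ • (cu • a ^ k) := (inv_smul_smul₀ hcune _).symm
    _ = 0 := by rw [h2, smul_zero]
  refine ⟨k', le_max_right k 1, fun m hm => ?_⟩
  have hm0 : a ^ m = 0 := pow_eq_zero_of_le ((le_max_left k 1).trans hm) hak
  rw [hm0, mul_zero, zero_mul]
  exact Submodule.zero_mem _
end

section
/- Let K be a field of characteristic zero and A a unital K-algebra such that every K-subalgebra of A generated by finitely many elements is finite dimensional over K. If φ is a locally finite K-algebra automorphism of A, then the image of I − φ is a Mathieu subspace of A. -/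
open LinearMap Module Set


lemma aux_vdm {F : Type*} [Field F] : ∀ (s : Finset F), (0:F) ∉ s → ∀ (d : F → F),
    (∀ m : ℕ, 1 ≤ m → ∑ x ∈ s, d x * x ^ m = 0) → ∀ x ∈ s, d x = 0 := by
  classical
  intro s
  induction s using Finset.induction with
  | empty => simp
  | @insert a t ha ih =>
    intro hs d h
    have ha0 : (a:F) ≠ 0 := fun h0 => hs (h0 ▸ Finset.mem_insert_self a t)
    have ht0 : (0:F) ∉ t := fun h0 => hs (Finset.mem_insert_of_mem h0)
    have key : ∀ x ∈ t, d x * (x - a) = 0 := by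
      refine ih ht0 (fun x => d x * (x - a)) ?_
      intro m hm
      have h1 := h (m+1) (by omega)
      have h2 := h m hm
      have heq : ∑ x ∈ insert a t, (d x * x ^ (m+1) - a * (d x * x ^ m)) = 0 := by
        rw [Finset.sum_sub_distrib, h1, ← Finset.mul_sum, h2, mul_zero, sub_zero]
      rw [Finset.sum_insert ha] at heq
      have hterm : d a * a ^ (m+1) - a * (d a * a ^ m) = 0 := by ring
      rw [hterm, zero_add] at heq
      rw [← heq]
      exact Finset.sum_congr rfl fun x hx => by ring
    intro x hx
    rcases Finset.mem_insert.mp hx with rfl | hx'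
    · have h1 := h 1 le_rfl
      rw [Finset.sum_insert ha] at h1
      have hz : ∑ y ∈ t, d y * y ^ 1 = 0 := by
        apply Finset.sum_eq_zero
        intro y hy
        have hy0 : (y:F) ≠ x := fun h0 => ha (h0 ▸ hy)
        rcases mul_eq_zero.mp (key y hy) with h' | h'
        · rw [h', zero_mul]
        · exact absurd (sub_eq_zero.mp h') hy0
      rw [hz, add_zero, pow_one] at h1
      exact (mul_eq_zero.mp h1).resolve_right ha0
    · have hx0 : (x:F) ≠ a := fun h0 => ha (h0 ▸ hx')
      rcases mul_eq_zero.mp (key x hx') with h' | h'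
      · exact h'
      · exact absurd (sub_eq_zero.mp h') hx0

lemma trace_pow_of_nilpotent_sub {F V : Type*} [Field F] [AddCommGroup V] [Module F V]
    [FiniteDimensional F V] (g : Module.End F V) (μ : F)
    (hg : IsNilpotent (g - algebraMap F (Module.End F V) μ)) (m : ℕ) :
    trace F V (g ^ m) = (finrank F V : F) * μ ^ m := by
  set N := g - algebraMap F (Module.End F V) μ with hN
  have hcomm : Commute N (algebraMap F (Module.End F V) μ) := (Algebra.commutes μ N).symm
  have hgN : g = N + algebraMap F (Module.End F V) μ := (sub_add_cancel _ _).symm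
  rw [hgN, Commute.add_pow hcomm, map_sum]
  have hterm : ∀ k ∈ Finset.range (m+1),
      trace F V (N ^ k * (algebraMap F (Module.End F V) μ) ^ (m - k) *
        (m.choose k : Module.End F V))
        = if k = 0 then (finrank F V : F) * μ ^ m else 0 := by
    intro k hk
    have h2 : N ^ k * (algebraMap F (Module.End F V) μ) ^ (m - k) *
        (m.choose k : Module.End F V)
        = ((m.choose k : F) * μ ^ (m-k)) • N ^ k := by
      rw [← map_pow, ← map_natCast (algebraMap F (Module.End F V)) (m.choose k), mul_assoc,
        ← map_mul, ← Algebra.commutes, ← Algebra.smul_def, mul_comm]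
    rw [h2, map_smul]
    rcases Nat.eq_zero_or_pos k with rfl | hkpos
    · simp [trace_id, Nat.sub_zero]
      ring
    · have hNk : IsNilpotent (N ^ k) := hg.pow_of_pos hkpos.ne'
      have := LinearMap.isNilpotent_trace_of_isNilpotent hNk
      rw [if_neg hkpos.ne', this.eq_zero, smul_zero]
  rw [Finset.sum_congr rfl hterm]
  simp

lemma isNilpotent_of_trace_pow_ac {F V : Type*} [Field F] [IsAlgClosed F] [CharZero F]
    [AddCommGroup V] [Module F V] [FiniteDimensional F V] (f : Module.End F V)
    (h : ∀ m : ℕ, 1 ≤ m → trace F V (f ^ m) = 0) : IsNilpotent f := by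
  classical
  have hT : ⨆ μ, f.maxGenEigenspace μ = ⊤ := Module.End.iSup_maxGenEigenspace_eq_top f
  have hInd := f.independent_maxGenEigenspace
  have internal := DirectSum.isInternal_submodule_of_iSupIndep_of_iSup_eq_top hInd hT
  have hfin : {μ | f.maxGenEigenspace μ ≠ ⊥}.Finite :=
    WellFoundedGT.finite_ne_bot_of_iSupIndep hInd
  have hMapsTo : ∀ (m : ℕ) (μ : F),
      MapsTo (f ^ m) ↑(f.maxGenEigenspace μ) ↑(f.maxGenEigenspace μ) :=
    fun m μ => Module.End.mapsTo_maxGenEigenspace_of_comm ((Commute.refl f).pow_right m) μ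
  have htr : ∀ m : ℕ, trace F V (f ^ m)
      = ∑ μ ∈ hfin.toFinset, (finrank F (f.maxGenEigenspace μ) : F) * μ ^ m := by
    intro m
    rw [trace_eq_sum_trace_restrict' internal hfin (hMapsTo m)]
    refine Finset.sum_congr rfl fun μ _ => ?_
    have h1 : ∀ x ∈ f.maxGenEigenspace μ, f x ∈ f.maxGenEigenspace μ :=
      Module.End.mapsTo_maxGenEigenspace_of_comm (Commute.refl f) μ
    have hres : (f ^ m).restrict (hMapsTo m μ) = (f.restrict h1) ^ m :=
      (Module.End.pow_restrict m h1).symm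
    rw [hres]
    have hnil := f.isNilpotent_restrict_maxGenEigenspace_sub_algebraMap μ
    have heq : f.restrict h1 - algebraMap F (Module.End F (f.maxGenEigenspace μ)) μ
        = (f - algebraMap F (Module.End F V) μ).restrict
          (Module.End.mapsTo_maxGenEigenspace_of_comm
            (Algebra.mul_sub_algebraMap_commutes f μ) μ) := by
      ext x
      simp [LinearMap.restrict_apply, Module.algebraMap_end_apply]
      rfl
    exact trace_pow_of_nilpotent_sub _ μ (heq ▸ hnil) m
  -- conclude all nonzero eigenvalues have trivial gen eigenspace
  have hzero : ∀ μ ∈ hfin.toFinset.erase 0, f.maxGenEigenspace μ = ⊥ := by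
    intro μ hμ
    by_contra hne
    have : ((finrank F (f.maxGenEigenspace μ)) : F) = 0 := by
      refine aux_vdm (hfin.toFinset.erase 0) (Finset.notMem_erase 0 _)
        (fun x => (finrank F (f.maxGenEigenspace x) : F)) ?_ μ hμ
      intro m hm
      show ∑ x ∈ hfin.toFinset.erase 0, (finrank F (f.maxGenEigenspace x) : F) * x ^ m = 0
      rw [Finset.sum_erase (f := fun x => (finrank F (f.maxGenEigenspace x) : F) * x ^ m) _
        (by simp [zero_pow (show m ≠ 0 by omega)]), ← htr m]
      exact h m hm
    have hpos : 0 < finrank F (f.maxGenEigenspace μ) := by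
      have : Nontrivial (f.maxGenEigenspace μ) := Submodule.nontrivial_iff_ne_bot.mpr hne
      exact finrank_pos
    exact absurd this (by exact_mod_cast hpos.ne')
  -- maxGenEigenspace 0 = ⊤
  have htop : f.maxGenEigenspace 0 = ⊤ := by
    rw [← hT]
    apply le_antisymm (le_iSup _ 0)
    refine iSup_le fun μ => ?_
    rcases eq_or_ne μ 0 with rfl | hμ
    · exact le_rfl
    · rcases eq_or_ne (f.maxGenEigenspace μ) ⊥ with hb | hb
      · rw [hb]; exact bot_le
      · rw [hzero μ (Finset.mem_erase.mpr ⟨hμ, hfin.mem_toFinset.mpr hb⟩)]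
        exact bot_le
  -- nilpotent
  rw [LinearMap.isNilpotent_iff_charpoly, LinearMap.charpoly_eq_X_pow_iff]
  intro v
  have hv : v ∈ f.maxGenEigenspace 0 := htop ▸ Submodule.mem_top
  obtain ⟨k, hk⟩ := (Module.End.mem_maxGenEigenspace f 0 v).mp hv
  exact ⟨k, by simpa using hk⟩

lemma isNilpotent_of_trace_pow {K V : Type*} [Field K] [CharZero K]
    [AddCommGroup V] [Module K V] [FiniteDimensional K V] (f : Module.End K V)
    (h : ∀ m : ℕ, 1 ≤ m → trace K V (f ^ m) = 0) : IsNilpotent f := by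
  classical
  set n := finrank K V
  let b : Basis (Fin n) K V := finBasis K V
  let M : Matrix (Fin n) (Fin n) K := LinearMap.toMatrixAlgEquiv b f
  let F := AlgebraicClosure K
  haveI : CharZero F := charZero_of_injective_algebraMap (algebraMap K F).injective
  let σ : Matrix (Fin n) (Fin n) K →+* Matrix (Fin n) (Fin n) F := (algebraMap K F).mapMatrix
  let g : Module.End F (Fin n → F) := Matrix.toLinAlgEquiv' (σ M)
  have htrM : ∀ m : ℕ, 1 ≤ m → Matrix.trace (M ^ m) = 0 := by
    intro m hm
    have : trace K V (f ^ m) = Matrix.trace (M ^ m) := by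
      rw [trace_eq_matrix_trace K b (f ^ m)]
      congr 1
      show LinearMap.toMatrix b b (f ^ m) = M ^ m
      rw [show (M ^ m) = LinearMap.toMatrixAlgEquiv b (f ^ m) by rw [map_pow]]
      rfl
    rw [← this]; exact h m hm
  have hg : IsNilpotent g := by
    apply isNilpotent_of_trace_pow_ac
    intro m hm
    have h1 : g ^ m = Matrix.toLinAlgEquiv' (σ (M ^ m)) := by
      show (Matrix.toLinAlgEquiv' (σ M)) ^ m = _
      rw [← map_pow, ← map_pow]
    rw [h1, trace_eq_matrix_trace F (Pi.basisFun F (Fin n)), LinearMap.toMatrix_eq_toMatrix']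
    show Matrix.trace (LinearMap.toMatrixAlgEquiv' (Matrix.toLinAlgEquiv' (σ (M ^ m)))) = 0
    rw [LinearMap.toMatrixAlgEquiv'_toLinAlgEquiv']
    show Matrix.trace ((M ^ m).map (algebraMap K F)) = 0
    have : Matrix.trace ((M ^ m).map (algebraMap K F)) = algebraMap K F (Matrix.trace (M ^ m)) := by
      simp [Matrix.trace, Matrix.diag_map, map_sum]
    rw [this, htrM m hm, map_zero]
  -- descend nilpotency
  obtain ⟨N, hN⟩ := hg
  have hMN : σ (M ^ N) = 0 := by
    have h1 : σ (M ^ N) = LinearMap.toMatrixAlgEquiv' (g ^ N) := by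
      rw [map_pow, map_pow]
      congr 1
      exact (LinearMap.toMatrixAlgEquiv'_toLinAlgEquiv' (σ M)).symm
    rw [h1, hN, map_zero]
  have hMzero : M ^ N = 0 := by
    ext i j
    have h2 : σ (M ^ N) i j = (0 : Matrix (Fin n) (Fin n) F) i j := by rw [hMN]
    simp only [σ, RingHom.mapMatrix_apply, Matrix.map_apply, Matrix.zero_apply] at h2
    simp only [Matrix.zero_apply]
    exact (algebraMap K F).injective (h2.trans (map_zero _).symm)
  refine ⟨N, ?_⟩
  have h3 : (LinearMap.toMatrixAlgEquiv b) (f ^ N) = 0 := by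
    rw [map_pow]
    exact hMzero
  exact (LinearMap.toMatrixAlgEquiv b).injective (by rw [h3, map_zero])

set_option maxHeartbeats 1000000 in
/-- If φ is a locally finite K-algebra automorphism of A (with A satisfying (KC)),
then the image of I − φ is a Mathieu subspace of A. -/
theorem lfed_automorphism
    (K : Type*) [Field K] [CharZero K]
    (A : Type*) [Ring A] [Algebra K A]
    (hKC : ∀ s : Finset A, FiniteDimensional K (Algebra.adjoin K (s : Set A)))
    (φ : A ≃ₐ[K] A)
    (hLF : ∀ a : A,
      FiniteDimensional K (Submodule.span K (Set.range fun i : ℕ => (φ ^ i) a))) :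
    IsMathieuSubspace
      (LinearMap.range (LinearMap.id - φ.toLinearMap : A →ₗ[K] A)) := by
  classical
  set Φ : A →ₗ[K] A := LinearMap.id - φ.toLinearMap with hΦ
  intro a b c ha
  suffices hnil : IsNilpotent a by
    obtain ⟨N0, hN0⟩ := hnil
    refine ⟨N0 + 1, by omega, fun m hm => ?_⟩
    have hz : a ^ m = 0 := pow_eq_zero_of_le (show N0 ≤ m by omega) hN0
    rw [hz, mul_zero, zero_mul]
    exact Submodule.zero_mem _
  -- the span of the positive powers of `a` is finite dimensional
  haveI hBa : FiniteDimensional K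
      (Subalgebra.toSubmodule (Algebra.adjoin K ({a} : Set A))) := by
    have h := hKC {a}
    rw [Finset.coe_singleton] at h
    exact h
  set U : Submodule K A := Submodule.span K (Set.range fun m : ℕ => a ^ (m+1)) with hU
  have hUle : U ≤ Subalgebra.toSubmodule (Algebra.adjoin K ({a} : Set A)) := by
    rw [hU, Submodule.span_le]
    rintro x ⟨m, rfl⟩
    exact pow_mem (Algebra.subset_adjoin (Set.mem_singleton a)) _
  haveI hUfd : FiniteDimensional K U := Submodule.finiteDimensional_of_le hUle
  have hUfg : U.FG := Module.Finite.iff_fg.mp hUfd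
  have hle : U ≤ ⨆ m : ℕ, Submodule.span K {a ^ (m+1)} := by
    rw [hU, Submodule.span_range_eq_iSup]
  obtain ⟨s, hs⟩ := CompleteLattice.IsCompactElement.exists_finset_of_le_iSup
    (Submodule K A) ((Submodule.fg_iff_compact U).mp hUfg)
    (fun m : ℕ => Submodule.span K {a ^ (m+1)}) hle
  -- choose preimages of the powers indexed by `s`
  have hy : ∀ i : ℕ, ∃ z : A, Φ z = a ^ (i+1) := fun i => ha (i+1) (by omega)
  choose y hyy using hy
  -- orbit spans
  set O : A → Submodule K A := fun x => Submodule.span K (Set.range fun i : ℕ => (φ ^ i) x)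
    with hO
  have hOfg : ∀ x : A, (O x).FG := fun x => Module.Finite.iff_fg.mp (hLF x)
  have hOmem : ∀ x : A, x ∈ O x := fun x => Submodule.subset_span ⟨0, by simp⟩
  have hOst : ∀ x : A, ∀ z ∈ O x, φ z ∈ O x := by
    intro x z hz
    have : Submodule.map φ.toLinearMap (O x) ≤ O x := by
      rw [hO]
      simp only [Submodule.map_span, Submodule.span_le]
      rintro w ⟨v, ⟨i, rfl⟩, rfl⟩
      refine Submodule.subset_span ⟨i+1, ?_⟩
      have hcomm : (φ ^ i) * φ = φ * (φ ^ i) := by rw [← pow_succ, ← pow_succ']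
      calc (φ ^ (i+1)) x = ((φ ^ i) * φ) x := by rw [pow_succ]
        _ = (φ * (φ ^ i)) x := by rw [hcomm]
        _ = φ ((φ ^ i) x) := rfl
    exact this ⟨z, hz, rfl⟩
  set T : Submodule K A := O a ⊔ ⨆ i ∈ s, O (y i) with hT
  have hTfg : T.FG := (hOfg a).sup (Submodule.fg_biSup s _ fun i _ => hOfg (y i))
  have hφT : ∀ z ∈ T, φ z ∈ T := by
    intro z hz
    have hmap : Submodule.map φ.toLinearMap T ≤ T := by
      rw [hT, Submodule.map_sup]
      apply sup_le_sup
      · exact Submodule.map_le_iff_le_comap.mpr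
          (fun w hw => show φ w ∈ O a from hOst a w hw)
      · rw [Submodule.map_iSup]
        refine iSup_le fun i => ?_
        rw [Submodule.map_iSup]
        refine iSup_le fun hi => ?_
        have h1 : Submodule.map φ.toLinearMap (O (y i)) ≤ O (y i) :=
          Submodule.map_le_iff_le_comap.mpr
            (fun w hw => show φ w ∈ O (y i) from hOst (y i) w hw)
        exact le_trans h1 (le_iSup₂ (f := fun i _ => O (y i)) i hi)
    exact hmap ⟨z, hz, rfl⟩
  obtain ⟨G, hGfin, hGspan⟩ := Submodule.fg_def.mp hTfg
  set Wa : Subalgebra K A := Algebra.adjoin K G with hWa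
  haveI hWfd : FiniteDimensional K Wa := by
    have := hKC hGfin.toFinset
    rwa [hGfin.coe_toFinset] at this
  have hGT : G ⊆ (T : Set A) := by rw [← hGspan]; exact Submodule.subset_span
  have hTW : T ≤ Subalgebra.toSubmodule Wa := by
    rw [← hGspan, Submodule.span_le]
    exact Algebra.subset_adjoin
  have hφW : ∀ x ∈ Wa, φ x ∈ Wa := by
    intro x hx
    have hsub : Subalgebra.map (φ : A →ₐ[K] A) Wa ≤ Wa := by
      rw [hWa, AlgHom.map_adjoin]
      apply Algebra.adjoin_le
      rintro z ⟨g, hg, rfl⟩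
      exact hTW (hφT g (hGT hg))
    exact hsub ⟨x, hx, rfl⟩
  have haW : a ∈ Wa := hTW (le_sup_left (α := Submodule K A) (hOmem a))
  have hyW : ∀ i ∈ s, y i ∈ Wa := fun i hi =>
    hTW (le_sup_right (α := Submodule K A)
      ((le_iSup₂ (f := fun i _ => O (y i)) i hi) (hOmem (y i))))
  -- every positive power of `a` is in `Φ(Wa)`
  have hstep : ∀ m : ℕ, a ^ (m+1) ∈ Submodule.map Φ (Subalgebra.toSubmodule Wa) := by
    intro m
    have h1 : a ^ (m+1) ∈ U := Submodule.subset_span ⟨m, rfl⟩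
    have h3 : (⨆ i ∈ s, Submodule.span K {a ^ (i+1)}) ≤
        Submodule.map Φ (Subalgebra.toSubmodule Wa) := by
      refine iSup₂_le fun i hi => ?_
      rw [Submodule.span_singleton_le_iff_mem]
      exact ⟨y i, hyW i hi, hyy i⟩
    exact h3 (hs h1)
  -- move inside Wa
  set φW : Wa →ₐ[K] Wa :=
    AlgHom.codRestrict ((φ : A →ₐ[K] A).comp Wa.val) Wa (fun x => hφW x x.2) with hφWdef
  have hφWcoe : ∀ x : Wa, (φW x : A) = φ (x : A) := fun x => rfl
  have hinj : Function.Injective φW := by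
    intro u v huv
    exact Subtype.ext (φ.injective (by rw [← hφWcoe u, ← hφWcoe v, huv]))
  have hbij : Function.Bijective (φW.toLinearMap : Wa →ₗ[K] Wa) :=
    ⟨hinj, (LinearMap.injective_iff_surjective).mp hinj⟩
  set e : Wa ≃ₗ[K] Wa := LinearEquiv.ofBijective φW.toLinearMap hbij with he
  set L : Wa →ₐ[K] Module.End K Wa := Algebra.lmul K Wa with hL
  have keytrace : ∀ u : Wa, trace K Wa (L (u - φW u)) = 0 := by
    intro u
    have hconj : L (φW u) = e.conj (L u) := by
      apply LinearMap.ext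
      intro x
      have h1 : e.conj (L u) x = φW (u * e.symm x) := rfl
      rw [h1, map_mul]
      have h2 : φW (e.symm x) = x := e.apply_symm_apply x
      rw [show φW (e.symm x) = e (e.symm x) from rfl, e.apply_symm_apply]
      rfl
    rw [map_sub, map_sub, hconj, LinearMap.trace_conj', sub_self]
  set a' : Wa := ⟨a, haW⟩ with ha'
  have htra : ∀ m : ℕ, 1 ≤ m → trace K Wa ((L a') ^ m) = 0 := by
    intro m hm
    obtain ⟨u, huW, huΦ⟩ := hstep (m-1)
    have hm1 : m - 1 + 1 = m := by omega
    rw [hm1] at huΦ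
    have key : a' ^ m = ⟨u, huW⟩ - φW ⟨u, huW⟩ := by
      apply Subtype.ext
      push_cast
      rw [← huΦ]
      simp only [hΦ, LinearMap.sub_apply, LinearMap.id_apply]
      have := hφWcoe ⟨u, huW⟩
      push_cast
      rfl
    rw [← map_pow, key, keytrace]
  have hnL : IsNilpotent (L a') := isNilpotent_of_trace_pow _ htra
  obtain ⟨n, hn⟩ := hnL
  have ha'n : a' ^ n = 0 := by
    have h1 : a' ^ n = (L (a' ^ n)) 1 := by
      simp [hL, Algebra.lmul]
    rw [h1, map_pow, hn]
    rfl
  refine ⟨n, ?_⟩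
  have := congrArg (Subtype.val) ha'n
  push_cast at this
  simpa using this
end

section
/- Let K be a field of characteristic zero and A a unital K-algebra such that every K-subalgebra of A generated by finitely many elements is finite dimensional over K. Let φ be a locally finite K-algebra endomorphism of A such that the induced endomorphism of A / ⋃_{i≥1} Ker(φ^i) is surjective (i.e., for every a ∈ A there exist b ∈ A and k ≥ 1 with φ^k(a − φ(b)) = 0). Then for every idempotent e ∈ A, one has e ∈ (I − φ)(A) if and only if e ∈ ⋃_{i≥1} Ker(φ^i). -/
open LinearMap in
lemma core_trace {K : Type*} [Field K] [CharZero K] {C : Type*} [Ring C] [Algebra K C]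
    [FiniteDimensional K C] (ψ : C →ₐ[K] C) (hψ : Function.Surjective ψ)
    (e y : C) (he : e * e = e) (hey : e = y - ψ y) : e = 0 := by
  have hinj : Function.Bijective ψ.toLinearMap :=
    ⟨(LinearMap.injective_iff_surjective.mpr hψ), hψ⟩
  let g : C ≃ₗ[K] C := LinearEquiv.ofBijective ψ.toLinearMap hinj
  -- mulLeft (ψ y) = g.conj (mulLeft y)
  have hconj : mulLeft K (ψ y) = g.conj (mulLeft K y) := by
    ext c
    obtain ⟨b, hb⟩ := hψ c
    have hb' : g b = c := hb
    simp only [LinearEquiv.conj_apply, mulLeft_apply, comp_apply,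
      LinearEquiv.coe_coe]
    have hsymm : g.symm c = b := by rw [← hb']; exact g.symm_apply_apply b
    rw [hsymm]
    show ψ y * c = ψ (y * b)
    rw [map_mul, hb]
  have htr : trace K C (mulLeft K e) = 0 := by
    have : mulLeft K e = mulLeft K y - mulLeft K (ψ y) := by
      rw [hey]; ext c; simp [sub_mul]
    rw [this, map_sub, hconj, trace_conj']
    ring
  -- mulLeft e is idempotent, hence a projection onto its range
  have hproj : IsProj (range (mulLeft K e)) (mulLeft K e) := by
    constructor
    · intro x; exact LinearMap.mem_range_self _ x
    · rintro x ⟨z, rfl⟩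
      simp only [mulLeft_apply, ← mul_assoc, he]
  have := hproj.trace
  rw [htr] at this
  have h0 : Module.finrank K (range (mulLeft K e)) = 0 := by
    exact_mod_cast this.symm
  have hbot : range (mulLeft K e) = ⊥ := Submodule.finrank_eq_zero.mp h0
  have : mulLeft K e = 0 := range_eq_bot.mp hbot
  calc e = e * 1 := (mul_one e).symm
    _ = mulLeft K e 1 := rfl
    _ = 0 := by rw [this]; rfl

/-- Let K be a field of characteristic zero and A a unital K-algebra
satisfying (KC). Let φ be a locally finite K-algebra endomorphism of A such that the
induced endomorphism of A / ⋃_{i≥1} Ker(φ^i) is surjective. Then an idempotent e of A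
lies in (I − φ)(A) if and only if e ∈ ⋃_{i≥1} Ker(φ^i). -/
theorem idempotent_in_image_iff_in_ker_pow
    (K : Type*) [Field K] [CharZero K]
    (A : Type*) [Ring A] [Algebra K A]
    (hKC : ∀ s : Finset A, FiniteDimensional K (Algebra.adjoin K (s : Set A)))
    (φ : A →ₐ[K] A)
    (hLF : ∀ a : A,
      FiniteDimensional K (Submodule.span K (Set.range fun i : ℕ => (⇑φ)^[i] a)))
    (hsurj : ∀ a : A, ∃ b : A, ∃ k : ℕ, 1 ≤ k ∧ (⇑φ)^[k] (a - φ b) = 0)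
    (e : A) (he : e * e = e) :
    (∃ x : A, e = x - φ x) ↔ (∃ k : ℕ, 1 ≤ k ∧ (⇑φ)^[k] e = 0) := by
  have hpow : ∀ (n : ℕ) (a : A), (φ ^ n) a = (⇑φ)^[n] a := by
    intro n
    induction n with
    | zero => intro a; simp
    | succ n ih =>
      intro a
      rw [pow_succ, AlgHom.mul_apply, ih, Function.iterate_succ_apply]
  constructor
  · rintro ⟨x, hx⟩
    -- the span of the forward orbit of x
    set V : Submodule K A := Submodule.span K (Set.range fun i : ℕ => (⇑φ)^[i] x) with hVdef
    haveI : FiniteDimensional K V := hLF x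
    have hxV : x ∈ V := Submodule.subset_span ⟨0, rfl⟩
    have hφV : ∀ v ∈ V, φ v ∈ V := by
      intro v hv
      have hle : V.map φ.toLinearMap ≤ V := by
        rw [hVdef, Submodule.map_span]
        apply Submodule.span_le.mpr
        rintro _ ⟨_, ⟨i, rfl⟩, rfl⟩
        refine Submodule.subset_span ⟨i + 1, ?_⟩
        show (⇑φ)^[i + 1] x = φ ((⇑φ)^[i] x)
        exact Function.iterate_succ_apply' _ _ _
      exact hle ⟨v, hv, rfl⟩
    have heV : e ∈ V := by rw [hx]; exact sub_mem hxV (hφV x hxV)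
    -- a finite-dimensional φ-stable subalgebra containing e and x
    obtain ⟨s, hs⟩ : ∃ s : Finset A, Submodule.span K (s : Set A) = V := by
      obtain ⟨S, hSfin, hS⟩ := Submodule.fg_def.mp
        ((Submodule.fg_iff_finiteDimensional V).mpr inferInstance)
      exact ⟨hSfin.toFinset, by rwa [Set.Finite.coe_toFinset]⟩
    set B₀ : Subalgebra K A := Algebra.adjoin K (V : Set A) with hB₀def
    have hB₀ : B₀ = Algebra.adjoin K (s : Set A) := by
      apply le_antisymm
      · apply Algebra.adjoin_le
        intro v hv
        have h1 : V ≤ Subalgebra.toSubmodule (Algebra.adjoin K (s : Set A)) := by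
          rw [← hs]
          exact Submodule.span_le.mpr Algebra.subset_adjoin
        exact h1 hv
      · apply Algebra.adjoin_mono
        intro a ha
        exact hs ▸ Submodule.subset_span ha
    haveI hfdB₀ : FiniteDimensional K B₀ := hB₀ ▸ hKC s
    have hφB₀ : B₀.map φ ≤ B₀ := by
      rw [hB₀def, AlgHom.map_adjoin]
      apply Algebra.adjoin_mono
      rintro _ ⟨v, hv, rfl⟩
      exact hφV v hv
    -- the decreasing chain of images
    set B : ℕ → Subalgebra K A := fun n => B₀.map (φ ^ n) with hBdef
    have hB0 : B 0 = B₀ := by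
      simp only [hBdef, pow_zero]
      exact Subalgebra.map_id B₀
    have hBsucc : ∀ n, B (n + 1) = (B₀.map φ).map (φ ^ n) := by
      intro n
      have hp : φ ^ (n + 1) = (φ ^ n).comp φ := by rw [pow_succ]; rfl
      show B₀.map (φ ^ (n + 1)) = (B₀.map φ).map (φ ^ n)
      rw [hp, ← Subalgebra.map_map]
    have hdec : ∀ n, B (n + 1) ≤ B n := by
      intro n
      rw [hBsucc n]
      exact Subalgebra.map_mono hφB₀
    have hleB₀ : ∀ n, B n ≤ B₀ := by
      intro n
      induction n with
      | zero => exact hB0.le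
      | succ n ih => exact le_trans (hdec n) ih
    haveI hfd : ∀ n, FiniteDimensional K (B n) := by
      intro n
      haveI : FiniteDimensional K (Subalgebra.toSubmodule B₀) := hfdB₀
      exact Submodule.finiteDimensional_of_le
        (show Subalgebra.toSubmodule (B n) ≤ Subalgebra.toSubmodule B₀ from hleB₀ n)
    -- the dimensions stabilize
    obtain ⟨N, hN⟩ : ∃ N, B (N + 1) = B N := by
      by_contra hcon
      push_neg at hcon
      set d : ℕ → ℕ := fun n => Module.finrank K (B n) with hddef
      have hdlt : ∀ n, d (n + 1) < d n := by
        intro n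
        haveI : Module.Finite K (Subalgebra.toSubmodule (B n)) := hfd n
        have hmono : d (n + 1) ≤ d n := by
          show Module.finrank K (B (n + 1)) ≤ Module.finrank K (B n)
          rw [← Subalgebra.finrank_toSubmodule, ← Subalgebra.finrank_toSubmodule]
          exact Submodule.finrank_mono (hdec n)
        refine lt_of_le_of_ne hmono ?_
        intro hEq
        exact hcon n (Subalgebra.eq_of_le_of_finrank_eq (hdec n) hEq)
      have hsum : ∀ n, d n + n ≤ d 0 := by
        intro n
        induction n with
        | zero => simp
        | succ n ih => have := hdlt n; omega
      have := hsum (d 0 + 1)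
      omega
    -- the stable image C, with φ mapping C onto C
    set C : Subalgebra K A := B N with hCdef
    have hCmap : C.map φ = C := by
      have hp : φ ^ (N + 1) = φ.comp (φ ^ N) := by rw [pow_succ']; rfl
      calc C.map φ = (B₀.map (φ ^ N)).map φ := rfl
        _ = B₀.map (φ.comp (φ ^ N)) := Subalgebra.map_map B₀ φ (φ ^ N)
        _ = B (N + 1) := by rw [← hp]
        _ = C := hN
    haveI hfdC : FiniteDimensional K C := hfd N
    have hmemC : ∀ c : A, c ∈ C → φ c ∈ C := by
      intro c hc
      have : φ c ∈ C.map φ := ⟨c, hc, rfl⟩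
      rwa [hCmap] at this
    -- restrict φ to an algebra endomorphism of C
    set ψ : C →ₐ[K] C :=
      { toFun := fun c => ⟨φ c, hmemC c c.2⟩
        map_one' := Subtype.ext (by simp)
        map_mul' := fun a b => Subtype.ext (by simp)
        map_zero' := Subtype.ext (by simp)
        map_add' := fun a b => Subtype.ext (by simp)
        commutes' := fun r => Subtype.ext (by simp [Algebra.algebraMap_eq_smul_one]) } with hψdef
    have hψsurj : Function.Surjective ψ := by
      intro c
      have : (c : A) ∈ C.map φ := by rw [hCmap]; exact c.2
      obtain ⟨b, hb, hb2⟩ := this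
      exact ⟨⟨b, hb⟩, Subtype.ext hb2⟩
    -- the elements f = φ^[N] e and y = φ^[N] x lie in C
    have heB₀ : e ∈ B₀ := Algebra.subset_adjoin heV
    have hxB₀ : x ∈ B₀ := Algebra.subset_adjoin hxV
    have hfC : (⇑φ)^[N] e ∈ C := ⟨e, heB₀, hpow N e⟩
    have hyC : (⇑φ)^[N] x ∈ C := ⟨x, hxB₀, hpow N x⟩
    have hf_idem : (⇑φ)^[N] e * (⇑φ)^[N] e = (⇑φ)^[N] e := by
      rw [← hpow, ← map_mul, he]
    have hf_eq : (⇑φ)^[N] e = (⇑φ)^[N] x - φ ((⇑φ)^[N] x) := by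
      have h1 : (⇑φ)^[N] e = (φ ^ N) e := (hpow N e).symm
      rw [h1, hx, map_sub, hpow, hpow]
      congr 1
      rw [← Function.iterate_succ_apply, Function.iterate_succ_apply']
    -- apply the trace lemma in C
    have hzero : (⟨(⇑φ)^[N] e, hfC⟩ : C) = 0 := by
      apply core_trace ψ hψsurj _ ⟨(⇑φ)^[N] x, hyC⟩
      · exact Subtype.ext hf_idem
      · exact Subtype.ext hf_eq
    have hfzero : (⇑φ)^[N] e = 0 := congrArg Subtype.val hzero
    exact ⟨N + 1, Nat.le_add_left 1 N, by
      rw [Function.iterate_succ_apply', hfzero, map_zero]⟩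
  · rintro ⟨k, hk, hke⟩
    refine ⟨∑ i ∈ Finset.range k, (⇑φ)^[i] e, ?_⟩
    have h1 : φ (∑ i ∈ Finset.range k, (⇑φ)^[i] e)
        = ∑ i ∈ Finset.range k, (⇑φ)^[i + 1] e := by
      rw [map_sum]
      exact Finset.sum_congr rfl fun i _ => (Function.iterate_succ_apply' _ _ _).symm
    rw [h1, ← Finset.sum_sub_distrib, Finset.sum_range_sub' (fun i => (⇑φ)^[i] e) k,
      hke, sub_zero]
    rfl
end

section
/- Let K be a field of characteristic zero and A a finite dimensional unital K-algebra. Then for every K-algebra endomorphism φ of A, the image of I − φ is a Mathieu subspace of A; and for every K-derivation D of A, the image D(A) is a Mathieu subspace of A. -/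
open Matrix in
lemma vandermonde_trick {K : Type*} [Field K] {r : ℕ} (x : Fin r → K)
    (hx : Function.Injective x) (c : Fin r → K)
    (h : ∀ k : ℕ, 1 ≤ k → k ≤ r → ∑ i, c i * x i ^ k = 0) :
    ∀ i, c i * x i = 0 := by
  set A : Matrix (Fin r) (Fin r) K := (vandermonde x)ᵀ with hA
  have hdet : A.det ≠ 0 := by
    rw [hA, det_transpose, det_vandermonde]
    refine Finset.prod_ne_zero_iff.2 fun i _ => Finset.prod_ne_zero_iff.2
      fun j hj => sub_ne_zero.2 fun e => ?_
    exact absurd (hx e) (by simpa using (Finset.mem_Ioi.1 hj).ne')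
  have hmv : A.mulVec (fun i => c i * x i) = 0 := by
    funext k
    have := h (k + 1) (Nat.succ_le_succ (Nat.zero_le _)) (Nat.succ_le_of_lt k.is_lt)
    simp only [mulVec, dotProduct, hA, transpose_apply, vandermonde_apply, Pi.zero_apply]
    rw [← this]
    congr 1; funext i; ring
  have := Matrix.eq_zero_of_mulVec_eq_zero hdet hmv
  intro i; exact congrFun this i

open LinearMap Module Module.End Set in
lemma isNilpotent_of_trace_pow_eq_zero_algClosed {K : Type*} [Field K] [IsAlgClosed K] [CharZero K]
    {M : Type*} [AddCommGroup M] [Module K M] [FiniteDimensional K M]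
    (f : Module.End K M) (h : ∀ k : ℕ, 1 ≤ k → trace K M (f ^ k) = 0) :
    IsNilpotent f := by
  classical
  have hsup : ⨆ μ, f.maxGenEigenspace μ = ⊤ := Module.End.iSup_maxGenEigenspace_eq_top f
  have hind := f.independent_maxGenEigenspace
  have hint := DirectSum.isInternal_submodule_of_iSupIndep_of_iSup_eq_top hind hsup
  have hfin : {μ | f.maxGenEigenspace μ ≠ ⊥}.Finite :=
    WellFoundedGT.finite_ne_bot_of_iSupIndep hind
  have hmt : ∀ μ, MapsTo f ↑(f.maxGenEigenspace μ) ↑(f.maxGenEigenspace μ) :=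
    fun μ => f.mapsTo_maxGenEigenspace_of_comm rfl μ
  have hmtk : ∀ (k : ℕ) μ, MapsTo (f ^ k) ↑(f.maxGenEigenspace μ) ↑(f.maxGenEigenspace μ) :=
    fun k μ => f.mapsTo_maxGenEigenspace_of_comm (Commute.pow_right rfl k) μ
  -- trace of f^k restricted to a generalized eigenspace
  have key : ∀ (k : ℕ) μ, trace K _ ((f ^ k).restrict (hmtk k μ)) =
      μ ^ k * (finrank K (f.maxGenEigenspace μ) : K) := by
    intro k μ
    set E := f.maxGenEigenspace μ
    set g : Module.End K E := f.restrict (hmt μ) with hg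
    have hres : (f ^ k).restrict (hmtk k μ) = g ^ k := by
      rw [hg]; exact (Module.End.pow_restrict k (hmt μ) (hmtk k μ)).symm
    have hNnil : IsNilpotent (g - μ • 1) := by
      have h2 := f.isNilpotent_restrict_maxGenEigenspace_sub_algebraMap μ
      have heq : (f - algebraMap K (Module.End K M) μ).restrict
          (Module.End.mapsTo_maxGenEigenspace_of_comm
            (Algebra.mul_sub_algebraMap_commutes f μ) μ) = g - μ • 1 := by
        ext x
        simp [LinearMap.restrict_apply, hg, Algebra.algebraMap_eq_smul_one]
        rfl
      rw [heq] at h2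
      exact h2
    rw [hres]
    have hcomm : Commute (μ • (1 : Module.End K E)) (g - μ • 1) :=
      Commute.smul_left (Commute.one_left _) μ
    have hgdecomp : g ^ k = ∑ i ∈ Finset.range (k + 1),
        (μ • (1 : Module.End K E)) ^ i * (g - μ • 1) ^ (k - i) * (k.choose i : Module.End K E) := by
      have hadd : μ • (1 : Module.End K E) + (g - μ • 1) = g := by abel
      conv_lhs => rw [← hadd]
      exact Commute.add_pow hcomm k
    rw [hgdecomp, map_sum]
    have hterm : ∀ i ∈ Finset.range (k + 1), i ≠ k →
        trace K E ((μ • (1 : Module.End K E)) ^ i * (g - μ • 1) ^ (k - i)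
          * (k.choose i : Module.End K E)) = 0 := by
      intro i hi hik
      have hki : 0 < k - i := by
        have : i < k := lt_of_le_of_ne (Nat.lt_succ_iff.1 (Finset.mem_range.1 hi)) hik
        omega
      have hnilp : IsNilpotent ((g - μ • 1) ^ (k - i)) := hNnil.pow_of_pos (by omega)
      have h0 : trace K E ((g - μ • 1) ^ (k - i)) = 0 :=
        (LinearMap.isNilpotent_trace_of_isNilpotent hnilp).eq_zero
      have hcast : ((k.choose i : ℕ) : Module.End K E) = (k.choose i : ℕ) • 1 := by
        simp [nsmul_eq_mul]
      rw [hcast, smul_pow, one_pow, mul_smul_comm, smul_mul_assoc, mul_one, one_mul]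
      rw [map_nsmul, map_smul, h0, smul_zero, smul_zero]
    rw [Finset.sum_eq_single_of_mem k (Finset.self_mem_range_succ k) hterm]
    rw [smul_pow, one_pow, Nat.sub_self, pow_zero, mul_one, Nat.choose_self]
    simp [LinearMap.trace_one, mul_comm]
    exact Or.inl rfl
  -- total trace
  have htot : ∀ k : ℕ, trace K M (f ^ k) =
      ∑ μ ∈ hfin.toFinset, μ ^ k * (finrank K (f.maxGenEigenspace μ) : K) := by
    intro k
    rw [LinearMap.trace_eq_sum_trace_restrict' hint hfin (hmtk k)]
    exact Finset.sum_congr rfl fun μ _ => key k μ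
  -- every nonzero eigenvalue has trivial gen eigenspace
  have hzero : ∀ μ : K, μ ≠ 0 → f.maxGenEigenspace μ = ⊥ := by
    intro μ hμ
    by_contra hne
    have hμs : μ ∈ hfin.toFinset := by simpa using hne
    set s := hfin.toFinset
    set r := s.card
    have hvdm := vandermonde_trick (K := K) (r := r)
      (fun i => (s.equivFin.symm i : K)) (fun i j hij => by
        apply s.equivFin.symm.injective
        exact Subtype.ext hij)
      (fun i => (finrank K (f.maxGenEigenspace (s.equivFin.symm i : K)) : K))
      (fun k hk1 _ => by
        have h0 := h k hk1
        rw [htot k] at h0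
        have hsc := Equiv.sum_comp s.equivFin.symm
          (fun μs : {x // x ∈ s} =>
            (finrank K (f.maxGenEigenspace (μs : K)) : K) * (μs : K) ^ k)
        rw [hsc, Finset.sum_coe_sort s
          (fun μ : K => ((finrank K (f.maxGenEigenspace μ) : K)) * μ ^ k), ← h0]
        exact Finset.sum_congr rfl fun μ _ => mul_comm _ _)
    have hv := hvdm (s.equivFin ⟨μ, hμs⟩)
    have hee : s.equivFin.symm (s.equivFin ⟨μ, hμs⟩) = ⟨μ, hμs⟩ :=
      Equiv.symm_apply_apply _ _
    rw [hee] at hv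
    rcases mul_eq_zero.1 hv with h1 | h2
    · exact hne (Submodule.finrank_eq_zero.1 (by exact_mod_cast h1))
    · exact hμ h2
  -- conclude nilpotency
  have hmem : ∀ m : M, ∃ k : ℕ, (f ^ k) m = 0 := by
    intro m
    have hm : m ∈ f.maxGenEigenspace 0 := by
      have : (⨆ μ, f.maxGenEigenspace μ) ≤ f.maxGenEigenspace 0 := by
        apply iSup_le
        intro μ
        rcases eq_or_ne μ 0 with rfl | hμ
        · exact le_rfl
        · rw [hzero μ hμ]; exact bot_le
      exact this (by rw [hsup]; trivial)
    rw [Module.End.mem_maxGenEigenspace] at hm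
    simpa using hm
  exact ((LinearMap.charpoly_nilpotent_tfae f).out 2 0).1 hmem
open LinearMap Module in
lemma isNilpotent_of_trace_pow_eq_zero {K : Type*} [Field K] [CharZero K]
    {M : Type*} [AddCommGroup M] [Module K M] [FiniteDimensional K M]
    (f : Module.End K M) (h : ∀ k : ℕ, 1 ≤ k → trace K M (f ^ k) = 0) :
    IsNilpotent f := by
  let b := Module.Free.chooseBasis K M
  let n := Module.Free.ChooseBasisIndex K M
  let A : Matrix n n K := LinearMap.toMatrixAlgEquiv b f
  let L := AlgebraicClosure K
  let σ : K →+* L := algebraMap K L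
  let A' : Matrix n n L := σ.mapMatrix A
  let g : Module.End L (n → L) := Matrix.toLinAlgEquiv' A'
  have htr : ∀ C : Matrix n n L, trace L (n → L) (Matrix.toLinAlgEquiv' C) = Matrix.trace C := by
    intro C
    rw [trace_eq_matrix_trace L (Pi.basisFun L n), LinearMap.toMatrix_eq_toMatrix']
    congr 1
    exact LinearMap.toMatrix'_toLin' C
  have hg : ∀ k : ℕ, 1 ≤ k → trace L (n → L) (g ^ k) = 0 := by
    intro k hk
    have h1 : g ^ k = Matrix.toLinAlgEquiv' (A' ^ k) := (map_pow _ _ _).symm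
    have h2 : A' ^ k = σ.mapMatrix (A ^ k) := (map_pow σ.mapMatrix A k).symm
    have h4 : Matrix.trace (A ^ k) = trace K M (f ^ k) := by
      rw [trace_eq_matrix_trace K b]
      rw [show A ^ k = LinearMap.toMatrixAlgEquiv b (f ^ k) from (map_pow _ f k).symm]
      rfl
    rw [h1, h2, htr]
    have h5 : Matrix.trace (σ.mapMatrix (A ^ k)) = σ (Matrix.trace (A ^ k)) := by
      simp [Matrix.trace, RingHom.mapMatrix_apply, Matrix.diag, map_sum]
    rw [h5, h4, h k hk, map_zero]
  have hgnil : IsNilpotent g := isNilpotent_of_trace_pow_eq_zero_algClosed g hg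
  have hA'nil : IsNilpotent A' := by
    obtain ⟨m, hm⟩ := hgnil
    refine ⟨m, ?_⟩
    have h6 : Matrix.toLinAlgEquiv' (A' ^ m) = 0 := by rw [map_pow]; exact hm
    have := congrArg Matrix.toLinAlgEquiv'.symm h6
    simpa using this
  have hAnil : IsNilpotent A := by
    obtain ⟨m, hm⟩ := hA'nil
    refine ⟨m, ?_⟩
    have h7 : σ.mapMatrix (A ^ m) = 0 := by rw [map_pow]; exact hm
    ext i j
    have h8 := congrFun (congrFun (congrArg Matrix.of.symm h7) i) j
    exact σ.injective (by simpa [RingHom.mapMatrix_apply, Matrix.map_apply] using h8)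
  obtain ⟨m, hm⟩ := hAnil
  refine ⟨m, ?_⟩
  have h9 : LinearMap.toMatrixAlgEquiv b (f ^ m) = 0 := by rw [map_pow]; exact hm
  have := congrArg (Matrix.toLinAlgEquiv b) h9
  simpa using this


open LinearMap Module in
/-- Let K be a field of characteristic zero and A a finite dimensional unital
K-algebra. Then for every K-algebra endomorphism φ of A, the image of I − φ is a Mathieu
subspace of A; and for every K-derivation D of A, the image D(A) is a Mathieu subspace
of A. -/
theorem lfed_finite_dimensional
    (K : Type*) [Field K] [CharZero K]
    (A : Type*) [Ring A] [Algebra K A] [FiniteDimensional K A] :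
    (∀ φ : A →ₐ[K] A,
      IsMathieuSubspace
        (LinearMap.range (LinearMap.id - φ.toLinearMap : A →ₗ[K] A))) ∧
    (∀ D : A →ₗ[K] A, (∀ a b : A, D (a * b) = D a * b + a * D b) →
      IsMathieuSubspace (LinearMap.range D)) := by
  constructor
  · -- algebra endomorphisms
    intro φ a b c ha
    set f : A →ₗ[K] A := φ.toLinearMap with hfdef
    set n := finrank K A with hn
    have hmul : ∀ (m : ℕ) (x y : A), (f ^ m) (x * y) = (f ^ m) x * (f ^ m) y := by
      intro m
      induction m with
      | zero => intro x y; simp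
      | succ m ih =>
        intro x y
        rw [pow_succ', Module.End.mul_apply, Module.End.mul_apply, Module.End.mul_apply]
        rw [ih x y]
        exact map_mul φ _ _
    have hone : ∀ m : ℕ, (f ^ m) (1 : A) = 1 := by
      intro m
      induction m with
      | zero => simp
      | succ m ih =>
        rw [pow_succ', Module.End.mul_apply]
        rw [ih]
        exact map_one φ
    have hpowx : ∀ (k : ℕ) (x : A), (f ^ n) (x ^ k) = ((f ^ n) x) ^ k := by
      intro k
      induction k with
      | zero => intro x; simp [hone]
      | succ k ih => intro x; rw [pow_succ, pow_succ, hmul, ih]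
    have hker : LinearMap.ker (f ^ (n + 1)) = LinearMap.ker (f ^ n) := by
      rw [Module.End.ker_pow_eq_ker_pow_finrank_of_le (Nat.le_succ n)]
    -- kernel of f^n is contained in the range of id - f
    have hkerV : ∀ w : A, (f ^ n) w = 0 →
        w ∈ LinearMap.range (LinearMap.id - f : A →ₗ[K] A) := by
      intro w hw
      refine ⟨∑ i ∈ Finset.range n, (f ^ i) w, ?_⟩
      have hstep : ∀ i : ℕ, (LinearMap.id - f : A →ₗ[K] A) ((f ^ i) w)
          = (f ^ i) w - (f ^ (i + 1)) w := by
        intro i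
        rw [LinearMap.sub_apply, LinearMap.id_apply, pow_succ', Module.End.mul_apply]
      calc (LinearMap.id - f : A →ₗ[K] A) (∑ i ∈ Finset.range n, (f ^ i) w)
          = ∑ i ∈ Finset.range n, ((f ^ i) w - (f ^ (i + 1)) w) := by
            rw [map_sum]; exact Finset.sum_congr rfl fun i _ => hstep i
        _ = (f ^ 0) w - (f ^ n) w := Finset.sum_range_sub' (fun i => (f ^ i) w) n
        _ = w := by rw [hw]; simp
    set S : Submodule K A := LinearMap.range (f ^ n) with hS
    have hmulS : ∀ z : A, ∀ x ∈ S, (LinearMap.mulLeft K ((f ^ n) z)) x ∈ S := by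
      rintro z x ⟨y, rfl⟩
      exact ⟨z * y, by rw [hmul]; rfl⟩
    have hfS : ∀ x ∈ S, f x ∈ S := by
      rintro x ⟨y, rfl⟩
      refine ⟨f y, ?_⟩
      rw [← Module.End.mul_apply, ← Module.End.mul_apply, ← pow_succ, ← pow_succ']
    set Φ : S →ₗ[K] S := f.restrict hfS with hΦ
    have hinj : Function.Injective Φ := by
      rw [← LinearMap.ker_eq_bot]
      rw [LinearMap.ker_eq_bot']
      rintro ⟨s, y, rfl⟩ h0
      have h1 : f ((f ^ n) y) = 0 := congrArg Subtype.val h0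
      have h2 : (f ^ (n + 1)) y = 0 := by
        rw [pow_succ', Module.End.mul_apply]; exact h1
      have h3 : y ∈ LinearMap.ker (f ^ n) := hker ▸ LinearMap.mem_ker.2 h2
      exact Subtype.ext (by simpa using h3)
    have hsurj : Function.Surjective Φ := LinearMap.injective_iff_surjective.1 hinj
    set e : S ≃ₗ[K] S := LinearEquiv.ofBijective Φ ⟨hinj, hsurj⟩ with he
    -- conjugation identity
    have hconj : ∀ z : A,
        trace K S ((LinearMap.mulLeft K ((f ^ n) (f z))).restrict (hmulS (f z)))
          = trace K S ((LinearMap.mulLeft K ((f ^ n) z)).restrict (hmulS z)) := by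
      intro z
      have hcomp : ((LinearMap.mulLeft K ((f ^ n) (f z))).restrict (hmulS (f z))) ∘ₗ
            (e : S →ₗ[K] S)
          = (e : S →ₗ[K] S) ∘ₗ ((LinearMap.mulLeft K ((f ^ n) z)).restrict (hmulS z)) := by
        refine LinearMap.ext fun s => Subtype.ext ?_
        show ((f ^ n) (f z)) * (f s) = f (((f ^ n) z) * (s : A))
        rw [show f (((f ^ n) z) * (s : A)) = f ((f ^ n) z) * f s from map_mul φ _ _]
        congr 1
        rw [← Module.End.mul_apply, ← Module.End.mul_apply, ← pow_succ, ← pow_succ']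
      have hconj' : e.conj ((LinearMap.mulLeft K ((f ^ n) z)).restrict (hmulS z))
          = (LinearMap.mulLeft K ((f ^ n) (f z))).restrict (hmulS (f z)) := by
        rw [LinearEquiv.conj_apply, ← hcomp, LinearMap.comp_assoc]
        have : (e : S →ₗ[K] S) ∘ₗ (e.symm : S →ₗ[K] S) = LinearMap.id := by
          ext s; simp
        rw [this, LinearMap.comp_id]
      rw [← hconj', LinearMap.trace_conj']
    -- the trace of powers of left multiplication by u := f^n a vanishes
    set u : A := (f ^ n) a with hu
    have hnil : IsNilpotent ((LinearMap.mulLeft K u).restrict (hmulS a)) := by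
      apply isNilpotent_of_trace_pow_eq_zero
      intro k hk
      have hpr : ((LinearMap.mulLeft K u).restrict (hmulS a)) ^ k
          = (LinearMap.mulLeft K ((f ^ n) (a ^ k))).restrict (hmulS (a ^ k)) := by
        rw [Module.End.pow_restrict]
        refine LinearMap.ext fun s => Subtype.ext ?_
        show ((LinearMap.mulLeft K u) ^ k) (s : A) = ((f ^ n) (a ^ k)) * (s : A)
        rw [LinearMap.pow_mulLeft, hpowx]
        rfl
      rw [hpr]
      obtain ⟨x, hx⟩ := ha k hk
      have hx' : x - f x = a ^ k := hx
      have hsplit : (LinearMap.mulLeft K ((f ^ n) (a ^ k))).restrict (hmulS (a ^ k))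
          = (LinearMap.mulLeft K ((f ^ n) x)).restrict (hmulS x)
            - (LinearMap.mulLeft K ((f ^ n) (f x))).restrict (hmulS (f x)) := by
        refine LinearMap.ext fun s => Subtype.ext ?_
        show ((f ^ n) (a ^ k)) * (s : A) = ((f ^ n) x) * (s : A) - ((f ^ n) (f x)) * (s : A)
        rw [← hx', map_sub, sub_mul]
      rw [hsplit]
      exact (map_sub (trace K S) _ _).trans (by rw [hconj x, sub_self])
    obtain ⟨m0, hm0⟩ := hnil
    have hum0 : u ^ m0 = 0 := by
      have h1S : (1 : A) ∈ S := ⟨1, hone n⟩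
      have h2 := LinearMap.congr_fun hm0 ⟨1, h1S⟩
      rw [Module.End.pow_restrict] at h2
      have h3 : ((LinearMap.mulLeft K u) ^ m0) (1 : A) = 0 := by
        have h4 := congrArg Subtype.val h2
        rwa [LinearMap.restrict_coe_apply] at h4
      rw [LinearMap.pow_mulLeft] at h3
      simpa using h3
    refine ⟨m0 + 1, Nat.le_add_left 1 m0, fun m hm => ?_⟩
    apply hkerV
    have hum : u ^ m = 0 := by
      have : u ^ m = u ^ m0 * u ^ (m - m0) := by rw [← pow_add]; congr 1; omega
      rw [this, hum0, zero_mul]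
    rw [hmul, hmul, hpowx, ← hu, hum, mul_zero, zero_mul]
  · -- derivations
    intro D hD a b c ha
    have htr0 : ∀ x : A, trace K A (LinearMap.mulLeft K (D x)) = 0 := by
      intro x
      have heq : LinearMap.mulLeft K (D x)
          = D * LinearMap.mulLeft K x - LinearMap.mulLeft K x * D := by
        ext y
        show D x * y = D (x * y) - x * D y
        rw [hD x y, add_sub_cancel_right]
      rw [heq, map_sub, LinearMap.trace_mul_comm, sub_self]
    have hnil : IsNilpotent (LinearMap.mulLeft K a) := by
      apply isNilpotent_of_trace_pow_eq_zero
      intro k hk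
      rw [LinearMap.pow_mulLeft]
      obtain ⟨x, hx⟩ := ha k hk
      rw [← hx]
      exact htr0 x
    obtain ⟨m0, hm0⟩ := hnil
    have ham0 : a ^ m0 = 0 := by
      have h2 := LinearMap.congr_fun hm0 1
      rw [LinearMap.pow_mulLeft] at h2
      simpa using h2
    refine ⟨m0 + 1, Nat.le_add_left 1 m0, fun m hm => ?_⟩
    have ham : a ^ m = 0 := by
      have : a ^ m = a ^ m0 * a ^ (m - m0) := by rw [← pow_add]; congr 1; omega
      rw [this, ham0, zero_mul]
    rw [ham, mul_zero, zero_mul]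
    exact Submodule.zero_mem _
end

section
/- Let K be a field of characteristic zero and A a unital K-algebra such that every K-subalgebra of A generated by finitely many elements is finite dimensional over K. If φ is a K-algebra automorphism of A of finite order (i.e., φ^n = I for some n ≥ 1), then the image of I − φ contains no nonzero idempotent of A. -/
/-- Let K be a field of characteristic zero and A a unital K-algebra
satisfying (KC). If φ is a K-algebra automorphism of A of finite order, then the image of
I − φ contains no nonzero idempotent of A. -/
theorem finite_order_automorphism_no_idempotent
    (K : Type*) [Field K] [CharZero K]
    (A : Type*) [Ring A] [Algebra K A]
    (hKC : ∀ s : Finset A, FiniteDimensional K (Algebra.adjoin K (s : Set A)))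
    (φ : A ≃ₐ[K] A) (hfin : ∃ n : ℕ, 1 ≤ n ∧ φ ^ n = 1)
    (e : A) (he : e * e = e) (heIm : ∃ x : A, e = x - φ x) :
    e = 0 := by
  classical
  obtain ⟨n, hn, hφn⟩ := hfin
  obtain ⟨x, hx⟩ := heIm
  -- the orbit of e under φ
  set s : Finset A := (Finset.range n).image (fun k => (φ ^ k) e) with hs
  set B := Algebra.adjoin K (s : Set A) with hB
  haveI : FiniteDimensional K B := hKC s
  -- each φ^k e lies in B
  have hmem : ∀ k, k < n → (φ ^ k) e ∈ B := fun k hk =>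
    Algebra.subset_adjoin (by
      simp only [hs, Finset.coe_image, Set.mem_image, Finset.mem_coe, Finset.mem_range]
      exact ⟨k, hk, rfl⟩)
  -- elements of B
  let f : ℕ → B := fun k => if hk : k < n then ⟨(φ ^ k) e, hmem k hk⟩ else 0
  -- each f k is idempotent
  have hfk : ∀ k, (f k) * (f k) = f k := by
    intro k
    by_cases hk : k < n
    · apply Subtype.ext
      simp only [f, dif_pos hk, MulMemClass.mk_mul_mk]
      rw [← map_mul, he]
    · simp [f, hk]
  -- the sum of all f k over range n is 0 (telescoping)
  have hsum : ∑ k ∈ Finset.range n, f k = 0 := by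
    apply Subtype.ext
    rw [AddSubmonoidClass.coe_finset_sum]
    have hterm : ∀ k ∈ Finset.range n, ((f k : A)) = (φ ^ k) x - (φ ^ (k + 1)) x := by
      intro k hk
      simp only [f, dif_pos (Finset.mem_range.mp hk)]
      rw [hx, map_sub, pow_succ]
      rfl
    rw [Finset.sum_congr rfl hterm, Finset.sum_range_sub' (fun k => (φ ^ k) x)]
    simp [hφn]
  -- left multiplication maps
  let L : B →ₗ[K] Module.End K B := LinearMap.mul K B
  -- trace of L (f k) is the finrank of its range
  have htr : ∀ k, LinearMap.trace K B (L (f k)) =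
      (Module.finrank K (LinearMap.range (L (f k))) : K) := by
    intro k
    have hidem : (L (f k)) ∘ₗ (L (f k)) = L (f k) := by
      ext b
      simp only [LinearMap.comp_apply, L, LinearMap.mul_apply']
      rw [← mul_assoc, hfk k]
    obtain ⟨p, hp⟩ := (LinearMap.isProj_iff_isIdempotentElem (L (f k))).mpr hidem
    have hrange : p = LinearMap.range (L (f k)) := by
      apply le_antisymm
      · intro y hy
        exact ⟨y, hp.2 y hy⟩
      · rintro y ⟨z, rfl⟩
        exact hp.1 z
    rw [← hrange]
    exact hp.trace
  -- the sum of the traces is 0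
  have hsumtr : ∑ k ∈ Finset.range n, LinearMap.trace K B (L (f k)) = 0 := by
    rw [← map_sum, ← map_sum, hsum, map_zero, map_zero]
  -- hence the sum of the finranks is 0
  have hranks : ∑ k ∈ Finset.range n, Module.finrank K (LinearMap.range (L (f k))) = 0 := by
    have : ((∑ k ∈ Finset.range n, Module.finrank K (LinearMap.range (L (f k)))) : K) = 0 := by
      rw [← hsumtr]
      exact Finset.sum_congr rfl fun k _ => (htr k).symm
    exact_mod_cast this
  -- so the rank of L (f 0) is 0
  have h0 : Module.finrank K (LinearMap.range (L (f 0))) = 0 := by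
    have := Finset.sum_eq_zero_iff.mp hranks 0 (Finset.mem_range.mpr hn)
    exact this
  have hbot : LinearMap.range (L (f 0)) = ⊥ :=
    Submodule.finrank_eq_zero.mp h0
  have : L (f 0) 1 = 0 := by
    have : L (f 0) 1 ∈ LinearMap.range (L (f 0)) := ⟨1, rfl⟩
    rw [hbot] at this
    exact this
  have hf0 : f 0 = 0 := by
    rwa [show L (f 0) 1 = f 0 * 1 from rfl, mul_one] at this
  have hn' : 0 < n := hn
  have hf0' : (f 0 : A) = e := by simp [f, hn']
  have := congrArg Subtype.val hf0
  rw [hf0'] at this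
  simpa using this
end

section
/- Let K be a field (of arbitrary characteristic) and A a unital K-algebra that is algebraic over K (every element of A is a root of a nonzero polynomial over K). Then a K-subspace V of A is a Mathieu subspace of A if and only if for every idempotent e ∈ V, the two-sided ideal of A generated by e is contained in V. -/
open Polynomial in
/-- Auxiliary: if `f` has zero constant coefficient and all positive powers of `a` lie in
`V`, then `aeval a f ∈ V`. -/
lemma aeval_mem_of_coeff_zero {K : Type*} [Field K] {A : Type*} [Ring A] [Algebra K A]
    (V : Submodule K A) {a : A} (ha : ∀ m : ℕ, 1 ≤ m → a ^ m ∈ V)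
    {f : K[X]} (h0 : f.coeff 0 = 0) : aeval a f ∈ V := by
  rw [aeval_eq_sum_range]
  refine Submodule.sum_mem _ fun i hi => ?_
  rcases Nat.eq_zero_or_pos i with rfl | hipos
  · simp [h0]
  · exact Submodule.smul_mem _ _ (ha i hipos)

open Polynomial in
/-- Let K be a field of arbitrary characteristic and A a unital K-algebra
that is algebraic over K. Then a K-subspace V of A is a Mathieu subspace of A if and only
if for every idempotent e ∈ V the two-sided ideal of A generated by e is contained in V. -/
theorem mathieu_subspace_iff_idempotents
    (K : Type*) [Field K]
    (A : Type*) [Ring A] [Algebra K A]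
    (halg : ∀ a : A, IsAlgebraic K a)
    (V : Submodule K A) :
    IsMathieuSubspace V ↔
      ∀ e : A, e ∈ V → e * e = e →
        ∀ x : A, x ∈ TwoSidedIdeal.span {e} → x ∈ V := by
  constructor
  · intro hM e heV hide x hx
    have hepow : ∀ m : ℕ, 1 ≤ m → e ^ m = e := by
      intro m hm
      induction m with
      | zero => omega
      | succ n ih =>
        rcases Nat.eq_zero_or_pos n with rfl | hn
        · simp
        · rw [pow_succ, ih hn, hide]
    have hbec : ∀ b c : A, b * e * c ∈ V := by
      intro b c
      obtain ⟨N, hN1, hN⟩ := hM e b c (fun m hm => by rw [hepow m hm]; exact heV)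
      have := hN N le_rfl
      rwa [hepow N hN1] at this
    set gens : Set A := {y | ∃ b c : A, y = b * e * c} with hgens
    set W : Submodule K A := Submodule.span K gens with hW
    have hleft : ∀ {r x : A}, x ∈ W → r * x ∈ W := by
      intro r x hxW
      refine Submodule.span_induction ?_ ?_ ?_ ?_ hxW
      · rintro y ⟨b, c, rfl⟩
        exact Submodule.subset_span ⟨r * b, c, by simp [mul_assoc]⟩
      · simp
      · intro y z _ _ hy hz
        rw [mul_add]; exact W.add_mem hy hz
      · intro t y _ hy
        rw [mul_smul_comm]; exact W.smul_mem t hy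
    have hright : ∀ {x r : A}, x ∈ W → x * r ∈ W := by
      intro x r hxW
      refine Submodule.span_induction ?_ ?_ ?_ ?_ hxW
      · rintro y ⟨b, c, rfl⟩
        exact Submodule.subset_span ⟨b, c * r, by simp [mul_assoc]⟩
      · simp
      · intro y z _ _ hy hz
        rw [add_mul]; exact W.add_mem hy hz
      · intro t y _ hy
        rw [smul_mul_assoc]; exact W.smul_mem t hy
    have heW : e ∈ W := Submodule.subset_span ⟨1, 1, by simp⟩
    rw [TwoSidedIdeal.mem_span_iff] at hx
    have hxI := hx (TwoSidedIdeal.mk' (W : Set A) W.zero_mem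
      (fun h1 h2 => W.add_mem h1 h2) (fun h1 => W.neg_mem h1)
      (fun h1 => hleft h1) (fun h1 => hright h1))
      (by
        intro y hy
        rw [Set.mem_singleton_iff] at hy; subst hy
        exact (TwoSidedIdeal.mem_mk' _ _ _ _ _ _ _).2 heW)
    have hxW : x ∈ W := (TwoSidedIdeal.mem_mk' _ _ _ _ _ _ _).1 hxI
    have hWV : W ≤ V := Submodule.span_le.2 (by rintro y ⟨b, c, rfl⟩; exact hbec b c)
    exact hWV hxW
  · intro h a b c ha
    obtain ⟨p0, hp0ne, hp0⟩ := halg a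
    set p : K[X] := X * p0 with hpdef
    have hpne : p ≠ 0 := mul_ne_zero X_ne_zero hp0ne
    have hpa : aeval a p = 0 := by simp [hpdef, hp0]
    obtain ⟨q, hpq, hqnd⟩ := p.exists_eq_pow_rootMultiplicity_mul_and_not_dvd hpne 0
    set k := p.rootMultiplicity 0 with hk
    have hk1 : 1 ≤ k := by
      rw [hk]
      exact (rootMultiplicity_pos hpne).2 (by simp [IsRoot, hpdef])
    rw [C_0, sub_zero] at hpq hqnd
    have hcop : IsCoprime (X ^ k : K[X]) q :=
      ((irreducible_X.coprime_iff_not_dvd).2 hqnd).pow_left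
    obtain ⟨u, v, huv⟩ := hcop
    set f : K[X] := u * X ^ k with hf
    set e : A := aeval a f with he
    have hff : f * f = f - (u * v) * p := by
      rw [hf]; linear_combination (u * X ^ k) * huv + (u * v) * hpq
    have hee : e * e = e := by
      rw [he, ← map_mul, hff, map_sub, map_mul _ (u * v) p, hpa, mul_zero, sub_zero]
    have heV : e ∈ V := by
      refine aeval_mem_of_coeff_zero V ha ?_
      rw [hf, coeff_zero_eq_eval_zero]
      simp [zero_pow (by omega : k ≠ 0)]
    refine ⟨k, hk1, fun m hm => ?_⟩
    have hmk : (X : K[X]) ^ (m - k) * X ^ k = X ^ m := by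
      rw [← pow_add, Nat.sub_add_cancel hm]
    have hXm : (X : K[X]) ^ m = f * X ^ m + (X ^ (m - k) * v) * p := by
      rw [hf]
      linear_combination (-(X ^ m : K[X])) * huv + (-(v * q)) * hmk
        + (-(X ^ (m - k) * v)) * hpq
    have ham : a ^ m = e * a ^ m := by
      have h2 := congrArg (aeval a) hXm
      simp only [map_add, map_mul, aeval_X_pow, hpa, mul_zero, add_zero] at h2
      rw [← he] at h2
      exact h2
    have hac : a ^ m * c = e * (a ^ m * c) := by
      rw [← mul_assoc, ← ham]
    rw [mul_assoc, hac]
    have h1 : e ∈ TwoSidedIdeal.span {e} := TwoSidedIdeal.subset_span rfl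
    exact h e heV hee _ (TwoSidedIdeal.mul_mem_left _ b _
      (TwoSidedIdeal.mul_mem_right _ e (a ^ m * c) h1))
end
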